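/- arXiv:1810.05130 — 9 statements merged into one kernel-verified Lean document; each statement's English description precedes it below -/
import Mathlib

section
/- Let Ω be a countable type, μ a probability mass function on Ω, G a finite type with |G| = n ≥ 1, and f : Ω → G any function. Write ν for the pushforward distribution of μ under f, i.e. ν(x) = Σ_{w : f(w) = x} μ(w), and write U for the uniform distribution on G, U(x) = 1/n. Then for every ω > 0, the total variation distance satisfies (1/2)·Σ_{x ∈ G} |ν(x) − 1/n| ≥ μ({w ∈ Ω : μ(w) ≥ e^ω / n}) − e^{−ω}. -/
open scoped BigOperators

/-- Entropic lower bound on total variation distance: for a probability mass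
function `μ` on a countable type `Ω`, a finite type `G` of cardinality `n`,
and any `f : Ω → G`, the total variation distance between the pushforward of
`μ` under `f` and the uniform distribution on `G` is at least
`μ {w | μ w ≥ e^ω / n} - e^{-ω}`. -/
theorem tv_lower_bound_entropic {Ω : Type*} [Countable Ω] (μ : Ω → ℝ)
    (hμ0 : ∀ w, 0 ≤ μ w) (hμsum : Summable μ) (hμ1 : ∑' w, μ w = 1)
    {G : Type*} [Fintype G] (n : ℕ) (hn : 1 ≤ n) (hcard : Fintype.card G = n)
    (f : Ω → G) (ω : ℝ) (hω : 0 < ω) :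
    (1 / 2 : ℝ) * ∑ x : G, |(∑' w : {w : Ω // f w = x}, μ w.1) - 1 / (n : ℝ)| ≥
      (∑' w : {w : Ω // Real.exp ω / (n : ℝ) ≤ μ w}, μ w.1) - Real.exp (-ω) := by
  classical
  have hn' : (0 : ℝ) < n := by positivity
  set ν : G → ℝ := fun x => ∑' w : {w : Ω // f w = x}, μ w.1 with hνdef
  have hν0 : ∀ x, 0 ≤ ν x := fun x => tsum_nonneg fun w => hμ0 _
  have hfib : HasSum (fun x : G => ∑' w : f ⁻¹' {x}, μ w.1) 1 := by
    have := hμsum.hasSum.tsum_fiberwise f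
    rwa [hμ1] at this
  have hνsum : ∑ x : G, ν x = 1 := by
    rw [← hfib.tsum_eq, tsum_fintype]
    rfl
  set S : Set Ω := {w | Real.exp ω / (n : ℝ) ≤ μ w} with hSdef
  set B : Finset G := Finset.univ.filter (fun x => Real.exp ω / (n : ℝ) ≤ ν x) with hBdef
  -- each w with f w = x contributes μ w ≤ ν x
  have hsingle : ∀ (w : Ω), μ w ≤ ν (f w) := by
    intro w
    exact Summable.le_tsum (hμsum.subtype _) (⟨w, rfl⟩ : {w' : Ω // f w' = f w})
      (fun j _ => hμ0 _)
  have hSsub : ∀ w ∈ S, f w ∈ B := by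
    intro w hw
    simp only [hBdef, Finset.mem_filter, Finset.mem_univ, true_and]
    exact le_trans hw (hsingle w)
  -- μ(S) ≤ ∑_{x ∈ B} ν x
  have hindsum : Summable (S.indicator μ) := hμsum.indicator S
  have hindfib : HasSum (fun x : G => ∑' w : f ⁻¹' {x}, S.indicator μ w.1)
      (∑' w, S.indicator μ w) := hindsum.hasSum.tsum_fiberwise f
  have hμS : (∑' w : {w : Ω // Real.exp ω / (n : ℝ) ≤ μ w}, μ w.1) ≤ ∑ x ∈ B, ν x := by
    have h1 : (∑' w : {w : Ω // Real.exp ω / (n : ℝ) ≤ μ w}, μ w.1)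
        = ∑' w, S.indicator μ w := (tsum_subtype S μ)
    rw [h1, ← hindfib.tsum_eq, tsum_fintype]
    have hzero : ∀ x ∉ B, (∑' w : f ⁻¹' {x}, S.indicator μ w.1) = 0 := by
      intro x hx
      have : ∀ w : f ⁻¹' {x}, S.indicator μ w.1 = 0 := by
        rintro ⟨w, hw⟩
        by_contra h
        have hwS : w ∈ S := by
          by_contra hws; exact h (Set.indicator_of_notMem hws μ)
        have : f w ∈ B := hSsub w hwS
        rw [Set.mem_preimage, Set.mem_singleton_iff] at hw
        rw [hw] at this
        exact hx this
      simp [tsum_congr this]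
    rw [← Finset.sum_subset (Finset.subset_univ B)
      (fun x _ hx => hzero x hx)]
    refine Finset.sum_le_sum fun x _ => ?_
    refine Summable.tsum_le_tsum (fun w => ?_) (hindsum.subtype _) (hμsum.subtype _)
    exact Set.indicator_le_self' (fun w _ => hμ0 w) w.1
  -- card bound
  have hB1 : ∑ x ∈ B, ν x ≤ 1 := by
    rw [← hνsum]
    exact Finset.sum_le_sum_of_subset_of_nonneg (Finset.subset_univ B)
      (fun x _ _ => hν0 x)
  have hBcard : (B.card : ℝ) * (Real.exp ω / n) ≤ 1 := by
    calc (B.card : ℝ) * (Real.exp ω / n) = ∑ _x ∈ B, Real.exp ω / n := by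
          rw [Finset.sum_const, nsmul_eq_mul]
      _ ≤ ∑ x ∈ B, ν x := Finset.sum_le_sum fun x hx => (Finset.mem_filter.mp hx).2
      _ ≤ 1 := hB1
  have hBn : (B.card : ℝ) / n ≤ Real.exp (-ω) := by
    have h1 : (B.card : ℝ) * Real.exp ω ≤ n := by
      have h := hBcard
      rw [mul_div_assoc', div_le_one hn'] at h
      exact h
    rw [Real.exp_neg, div_le_iff₀ hn', inv_mul_eq_div, le_div_iff₀ (Real.exp_pos ω)]
    exact h1
  -- TV lower bound
  have hTV : ∑ x ∈ B, (ν x - 1 / (n : ℝ)) ≤ (1 / 2 : ℝ) * ∑ x : G, |ν x - 1 / (n : ℝ)| := by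
    have habs : ∀ a : ℝ, |a| = 2 * max a 0 - a := by
      intro a
      rcases le_total a 0 with h | h
      · rw [abs_of_nonpos h, max_eq_right h]; ring
      · rw [abs_of_nonneg h, max_eq_left h]; ring
    have hsum0 : ∑ x : G, (ν x - 1 / (n : ℝ)) = 0 := by
      rw [Finset.sum_sub_distrib, hνsum, Finset.sum_const, nsmul_eq_mul]
      rw [Finset.card_univ, hcard]
      field_simp
      ring
    have h2 : ∑ x : G, |ν x - 1 / (n : ℝ)| = 2 * ∑ x : G, max (ν x - 1 / (n : ℝ)) 0 := by
      calc ∑ x : G, |ν x - 1 / (n : ℝ)|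
          = ∑ x : G, (2 * max (ν x - 1 / (n : ℝ)) 0 - (ν x - 1 / (n : ℝ))) := by
            exact Finset.sum_congr rfl fun x _ => habs _
        _ = 2 * ∑ x : G, max (ν x - 1 / (n : ℝ)) 0 := by
            rw [Finset.sum_sub_distrib, hsum0, sub_zero, ← Finset.mul_sum]
    rw [h2]
    have : ∑ x ∈ B, (ν x - 1 / (n : ℝ)) ≤ ∑ x : G, max (ν x - 1 / (n : ℝ)) 0 := by
      calc ∑ x ∈ B, (ν x - 1 / (n : ℝ)) ≤ ∑ x ∈ B, max (ν x - 1 / (n : ℝ)) 0 :=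
            Finset.sum_le_sum fun x _ => le_max_left _ _
        _ ≤ ∑ x : G, max (ν x - 1 / (n : ℝ)) 0 :=
            Finset.sum_le_sum_of_subset_of_nonneg (Finset.subset_univ B)
              (fun x _ _ => le_max_right _ _)
    linarith
  have hfinal : (∑' w : {w : Ω // Real.exp ω / (n : ℝ) ≤ μ w}, μ w.1) - Real.exp (-ω)
      ≤ ∑ x ∈ B, (ν x - 1 / (n : ℝ)) := by
    have : ∑ x ∈ B, (ν x - 1 / (n : ℝ)) = (∑ x ∈ B, ν x) - (B.card : ℝ) / n := by
      rw [Finset.sum_sub_distrib, Finset.sum_const, nsmul_eq_mul]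
      ring
    rw [this]
    have := hμS
    linarith
  exact le_trans hfinal hTV
end

section
/- Let n ≥ 1 and k ≥ 1 be integers and a : Fin k → ℤ. Let g = gcd(n, gcd_{i} a_i) (the greatest common divisor of n and all the a_i, as a natural number). If X_1, …, X_k are independent and each uniformly distributed on ZMod n, then the distribution of Σ_{i=1}^k a_i • X_i is the uniform distribution on the subgroup {x ∈ ZMod n : (g : ZMod n) ∣ x}; equivalently, the pushforward of the uniform distribution on (ZMod n)^k under w ↦ Σ_i a_i • w_i is the uniform distribution on the set of multiples of g in ZMod n. -/
open scoped Classical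

lemma bezout_finset_gcd {k : ℕ} (a : Fin k → ℤ) (s : Finset (Fin k)) :
    ∃ c : Fin k → ℤ, ((s.gcd fun i => (a i).natAbs : ℕ) : ℤ) = ∑ i ∈ s, c i * a i := by
  classical
  induction s using Finset.induction_on with
  | empty => exact ⟨0, by simp⟩
  | @insert j s hj ih =>
    obtain ⟨c, hc⟩ := ih
    rw [Finset.gcd_insert]
    have hgcd : (gcd ((a j).natAbs) (s.gcd fun i => (a i).natAbs) : ℕ) =
        Nat.gcd ((a j).natAbs) (s.gcd fun i => (a i).natAbs) := rfl
    rw [hgcd]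
    set G : ℕ := s.gcd fun i => (a i).natAbs
    set A := Nat.gcdA ((a j).natAbs) G
    set B := Nat.gcdB ((a j).natAbs) G
    have hb := Nat.gcd_eq_gcd_ab ((a j).natAbs) G
    obtain he | he := Int.natAbs_eq (a j)
    · refine ⟨fun i => if i = j then A else B * c i, ?_⟩
      rw [Finset.sum_insert hj]; beta_reduce; rw [if_pos rfl]
      have : ∀ i ∈ s, (fun i => if i = j then A else B * c i) i * a i = B * (c i * a i) := by
        intro i hi
        beta_reduce; rw [if_neg (by rintro rfl; exact hj hi)]; ring
      rw [Finset.sum_congr rfl this, ← Finset.mul_sum, ← hc]; linear_combination hb - A * he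
    · refine ⟨fun i => if i = j then -A else B * c i, ?_⟩
      rw [Finset.sum_insert hj]; beta_reduce; rw [if_pos rfl]
      have : ∀ i ∈ s, (fun i => if i = j then -A else B * c i) i * a i = B * (c i * a i) := by
        intro i hi
        beta_reduce; rw [if_neg (by rintro rfl; exact hj hi)]; ring
      rw [Finset.sum_congr rfl this, ← Finset.mul_sum, ← hc]
      linear_combination hb + A * he

/-- If `X_1, …, X_k` are independent uniform elements of `ZMod n` (equivalently,
the random vector is uniform on `(ZMod n)^k`), then `∑ i, a i • X i` is uniform
on the set of multiples of `g = gcd(n, gcd_i a_i)` in `ZMod n`. -/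
theorem sum_smul_uniform_eq_uniform_multiples_gcd (n k : ℕ) [NeZero n] (hk : 1 ≤ k)
    (a : Fin k → ℤ) (g : ℕ)
    (hg : g = Nat.gcd n (Finset.univ.gcd fun i => (a i).natAbs)) :
    (PMF.uniformOfFintype (Fin k → ZMod n)).map (fun w => ∑ i, a i • w i) =
      PMF.uniformOfFinset
        (Finset.univ.filter fun x : ZMod n => (g : ZMod n) ∣ x)
        ⟨0, Finset.mem_filter.mpr ⟨Finset.mem_univ 0, dvd_zero _⟩⟩ := by
  classical
  set f : (Fin k → ZMod n) → ZMod n := fun w => ∑ i, a i • w i with hf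
  set G : ℕ := Finset.univ.gcd fun i => (a i).natAbs with hG
  -- every value of f is a multiple of g
  have hdvd : ∀ w, (g : ZMod n) ∣ f w := by
    intro w
    apply Finset.dvd_sum
    intro i _
    have h1 : (g : ℤ) ∣ a i := by
      have h0 : g ∣ G := hg ▸ Nat.gcd_dvd_right n G
      have h0' : G ∣ (a i).natAbs := by
        rw [hG]; exact Finset.gcd_dvd (Finset.mem_univ i)
      have : g ∣ (a i).natAbs := h0.trans h0'
      exact (Int.natCast_dvd_natCast.mpr this).trans (Int.natAbs_dvd.mpr dvd_rfl)
    have h2 : (g : ZMod n) ∣ ((a i : ℤ) : ZMod n) := by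
      have := map_dvd (Int.castRingHom (ZMod n)) h1
      simpa using this
    rw [zsmul_eq_mul]
    exact Dvd.dvd.mul_right h2 _
  -- every multiple of g is a value of f
  have hsurj : ∀ y : ZMod n, (g : ZMod n) ∣ y → ∃ w, f w = y := by
    intro y ⟨t, ht⟩
    obtain ⟨c, hc⟩ := bezout_finset_gcd a Finset.univ
    set B := Nat.gcdB n G with hB
    have hb : (g : ℤ) = n * Nat.gcdA n G + G * B := hg ▸ Nat.gcd_eq_gcd_ab n G
    rw [← hG] at hc
    have hzsum : (∑ i, B * c i * a i : ℤ) = (g : ℤ) - n * Nat.gcdA n G := by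
      have hms : (∑ i, B * c i * a i : ℤ) = B * ∑ i, c i * a i := by
        rw [Finset.mul_sum]; exact Finset.sum_congr rfl fun i _ => by ring
      rw [hms, ← hc]; linear_combination -hb
    have key : ((∑ i, B * c i * a i : ℤ) : ZMod n) = (g : ZMod n) := by
      rw [hzsum]; push_cast [ZMod.natCast_self]; ring
    refine ⟨fun i => ((B * c i : ℤ) : ZMod n) * t, ?_⟩
    rw [ht]
    simp only [hf, zsmul_eq_mul]
    calc (∑ i, ((a i : ℤ) : ZMod n) * (((B * c i : ℤ) : ZMod n) * t))
        = ((∑ i, B * c i * a i : ℤ) : ZMod n) * t := by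
          push_cast
          rw [Finset.sum_mul]
          apply Finset.sum_congr rfl
          intro i _; ring
      _ = (g : ZMod n) * t := by rw [key]
  set S := Finset.univ.filter fun x : ZMod n => (g : ZMod n) ∣ x with hS
  have hmemS : ∀ y : ZMod n, y ∈ S ↔ (g : ZMod n) ∣ y := by
    intro y; simp [hS]
  set K := Finset.univ.filter fun w : Fin k → ZMod n => f w = 0 with hK
  have hf0 : f 0 = 0 := by simp [hf]
  have hKpos : 0 < K.card := Finset.card_pos.mpr ⟨0, by simp [hK, hf0]⟩
  -- all fibers over S have the same cardinality
  have hfib : ∀ y ∈ S, (Finset.univ.filter fun w => f w = y).card = K.card := by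
    intro y hy
    obtain ⟨w0, hw0⟩ := hsurj y ((hmemS y).1 hy)
    apply Finset.card_bij' (fun w _ => w - w0) (fun w _ => w + w0)
    · intro w hw
      simp only [hK, Finset.mem_filter, Finset.mem_univ, true_and] at hw ⊢
      have : f (w - w0) = f w - f w0 := by
        simp [hf, smul_sub, mul_sub, Finset.sum_sub_distrib]
      rw [this, hw, hw0, sub_self]
    · intro w hw
      simp only [hK, Finset.mem_filter, Finset.mem_univ, true_and] at hw ⊢
      have : f (w + w0) = f w + f w0 := by
        simp [hf, smul_add, mul_add, Finset.sum_add_distrib]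
      rw [this, hw, hw0, zero_add]
    · intro w _; simp
    · intro w _; simp
  -- counting
  have htot : ∑ y ∈ S, (Finset.univ.filter fun w => f w = y).card
      = Fintype.card (Fin k → ZMod n) := by
    rw [← Finset.card_univ]
    exact (Finset.card_eq_sum_card_fiberwise fun x _ => (hmemS _).2 (hdvd x)).symm
  have hcount : K.card * S.card = Fintype.card (Fin k → ZMod n) := by
    rw [← htot, Finset.sum_congr rfl hfib, Finset.sum_const, smul_eq_mul, mul_comm]
  have hSpos : 0 < S.card := Finset.card_pos.mpr
    ⟨0, (hmemS 0).2 (dvd_zero _)⟩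
  have hNpos : 0 < Fintype.card (Fin k → ZMod n) := Fintype.card_pos
  -- now compute the PMF values
  ext y
  erw [PMF.map_apply, PMF.uniformOfFinset_apply, tsum_fintype]
  simp only [PMF.uniformOfFintype_apply]
  rw [← Finset.sum_filter, Finset.sum_const, nsmul_eq_mul]
  have hfilter_eq : (Finset.univ.filter fun x : Fin k → ZMod n => y = f x)
      = (Finset.univ.filter fun w => f w = y) :=
    Finset.filter_congr fun x _ => by simp [eq_comm]
  rw [hfilter_eq]
  by_cases hy : y ∈ S
  · rw [if_pos hy, hfib y hy]
    have hN : (Fintype.card (Fin k → ZMod n) : ENNReal) = (K.card : ENNReal) * S.card := by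
      rw [← hcount]; push_cast; ring
    rw [hN, ENNReal.mul_inv (Or.inl (by exact_mod_cast hKpos.ne'))
        (Or.inl (ENNReal.natCast_ne_top _)),
      ← mul_assoc, ENNReal.mul_inv_cancel (by exact_mod_cast hKpos.ne')
        (ENNReal.natCast_ne_top _), one_mul]
  · rw [if_neg hy]
    have : (Finset.univ.filter fun w => f w = y) = ∅ := by
      apply Finset.filter_false_of_mem
      intro x _ hx
      exact hy ((hmemS y).2 (hx ▸ hdvd x))
    rw [this]
    simp
end

section
/- Let d ≥ 1, let m : Fin d → ℕ with m_j ≥ 1 for all j, and let G = Π_{j} ZMod (m_j). Let k ≥ 1 and v : Fin k → ℤ, and for each j set g_j = gcd(m_j, gcd_i v_i) (a natural number; by convention gcd of integers taken as a natural number, and gcd(0, m) = m). If Z_1, …, Z_k are independent and each uniformly distributed on G, then the distribution of Σ_{i=1}^k v_i • Z_i is the uniform distribution on the subgroup H = {z ∈ G : for every j, (g_j : ZMod m_j) divides z_j}. -/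
open scoped Classical

-- aux 1: uniform map under equal-fiber (hom) is uniform on image
theorem pmf_map_uniform_addHom {A B : Type*} [Fintype A] [Nonempty A] [DecidableEq B]
    [AddCommGroup A] [AddCommGroup B] (f : A →+ B) (hne : (Finset.univ.image f).Nonempty) :
    (PMF.uniformOfFintype A).map f =
      PMF.uniformOfFinset (Finset.univ.image f) hne := by
  classical
  -- fiber cards equal
  set K := (Finset.univ.filter fun a : A => f a = 0).card with hK
  have hfib : ∀ a₀ : A, (Finset.univ.filter fun a => f a = f a₀).card = K := by
    intro a₀
    apply Finset.card_bij (fun x _ => x - a₀)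
    · intro x hx
      simp only [Finset.mem_filter, Finset.mem_univ, true_and] at hx ⊢
      simp [map_sub, hx]
    · intro x hx y hy h
      exact sub_left_injective h
    · intro y hy
      simp only [Finset.mem_filter, Finset.mem_univ, true_and] at hy
      refine ⟨y + a₀, ?_, by simp⟩
      simp [Finset.mem_filter, map_add, hy]
  have hKpos : 0 < K := by
    rw [hK]
    exact Finset.card_pos.mpr ⟨0, by simp⟩
  have hcardA : Fintype.card A = (Finset.univ.image f).card * K := by
    have := Finset.card_eq_sum_card_image f (Finset.univ : Finset A)
    rw [Finset.card_univ] at this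
    rw [this, Finset.sum_congr rfl, Finset.sum_const, smul_eq_mul]
    intro b hb
    obtain ⟨a₀, _, rfl⟩ := Finset.mem_image.mp hb
    exact hfib a₀
  ext b
  rw [PMF.map_apply, PMF.uniformOfFinset_apply, tsum_fintype]
  simp only [PMF.uniformOfFintype_apply]
  rw [← Finset.sum_filter, Finset.sum_const, nsmul_eq_mul]
  by_cases hb : b ∈ Finset.univ.image f
  · obtain ⟨a₀, _, rfl⟩ := Finset.mem_image.mp hb
    have : (Finset.univ.filter fun a : A => f a₀ = f a).card = K := by
      rw [← hfib a₀]; congr 1; ext a; simp [eq_comm]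
    rw [this, if_pos hb, hcardA]
    have hK0 : (K : ENNReal) ≠ 0 := by exact_mod_cast hKpos.ne'
    have hs0 : ((Finset.univ.image f).card : ENNReal) ≠ 0 := by
      exact_mod_cast (Finset.card_pos.mpr ⟨_, hb⟩).ne'
    rw [Nat.cast_mul, ENNReal.mul_inv (Or.inl hs0) (Or.inr hK0),
      mul_comm ((((Finset.univ.image f).card : ENNReal))⁻¹), ← mul_assoc,
      ENNReal.mul_inv_cancel hK0 (ENNReal.natCast_ne_top K), one_mul]
  · rw [if_neg hb]
    have : (Finset.univ.filter fun a : A => b = f a) = ∅ := by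
      ext a; simp only [Finset.mem_filter, Finset.mem_univ, true_and, Finset.notMem_empty, iff_false]
      intro h; exact hb (Finset.mem_image.mpr ⟨a, Finset.mem_univ a, h.symm⟩)
    rw [this]; simp

theorem gcd_combo {ι : Type*} (s : Finset ι) (f : ι → ℤ) :
    ∃ c : ι → ℤ, ∑ i ∈ s, c i * f i = ((s.gcd fun i => (f i).natAbs : ℕ) : ℤ) := by
  classical
  induction s using Finset.induction_on with
  | empty => exact ⟨0, by simp⟩
  | @insert a s ha ih =>
    obtain ⟨c, hc⟩ := ih
    set Gs : ℤ := ((s.gcd fun i => (f i).natAbs : ℕ) : ℤ) with hGs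
    refine ⟨fun i => if i = a then Int.gcdA (f a) Gs else Int.gcdB (f a) Gs * c i, ?_⟩
    rw [Finset.sum_insert ha]
    have e1 : (fun i => if i = a then Int.gcdA (f a) Gs else Int.gcdB (f a) Gs * c i) a
        = Int.gcdA (f a) Gs := if_pos rfl
    have e2 : ∀ i ∈ s, (fun i => if i = a then Int.gcdA (f a) Gs
        else Int.gcdB (f a) Gs * c i) i * f i = Int.gcdB (f a) Gs * (c i * f i) := by
      intro i hi
      simp only
      rw [if_neg (by rintro rfl; exact ha hi)]; ring
    rw [e1, Finset.sum_congr rfl e2, ← Finset.mul_sum, hc]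
    have hb : ((Int.gcd (f a) Gs : ℕ) : ℤ) = f a * Int.gcdA (f a) Gs + Gs * Int.gcdB (f a) Gs :=
      Int.gcd_eq_gcd_ab (f a) Gs
    have habs : Int.gcd (f a) Gs = Nat.gcd (f a).natAbs (s.gcd fun i => (f i).natAbs) := by
      unfold Int.gcd; rw [hGs]; simp
    have hins : ((insert a s).gcd fun i => (f i).natAbs)
        = Nat.gcd (f a).natAbs (s.gcd fun i => (f i).natAbs) := by
      rw [Finset.gcd_insert]; rfl
    rw [hins, ← habs, hb]; ring

theorem uniformOfFinset_congr {α : Type*} {s t : Finset α} (h : s = t) (hs : s.Nonempty)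
    (ht : t.Nonempty) : PMF.uniformOfFinset s hs = PMF.uniformOfFinset t ht := by
  subst h; rfl


set_option maxHeartbeats 2000000

/-- Key lemma on random inner products in a product of cyclic groups: if
`Z_1, …, Z_k` are independent uniform on `G = Π_j ZMod (m j)` (equivalently,
the random vector is uniform on `G^k`), then `∑ i, v i • Z i` is uniform on
the subgroup `H = {z | ∀ j, (g j : ZMod (m j)) ∣ z j}` where
`g j = gcd (m j) (gcd_i v_i)`. -/
theorem sum_smul_uniform_eq_uniform_subgroup (d : ℕ) (hd : 1 ≤ d)
    (m : Fin d → ℕ) (hm : ∀ j, 1 ≤ m j) [∀ j, NeZero (m j)]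
    (k : ℕ) (hk : 1 ≤ k) (v : Fin k → ℤ) (g : Fin d → ℕ)
    (hg : ∀ j, g j = Nat.gcd (m j) (Finset.univ.gcd fun i => (v i).natAbs)) :
    (PMF.uniformOfFintype (Fin k → ∀ j, ZMod (m j))).map (fun Z => ∑ i, v i • Z i) =
      PMF.uniformOfFinset
        (Finset.univ.filter fun z : ∀ j, ZMod (m j) => ∀ j, (g j : ZMod (m j)) ∣ z j)
        ⟨0, Finset.mem_filter.mpr ⟨Finset.mem_univ 0, fun j => dvd_zero _⟩⟩ := by
  classical
  set Gg : ℕ := Finset.univ.gcd fun i => (v i).natAbs with hGg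
  set F : (Fin k → ∀ j, ZMod (m j)) →+ (∀ j, ZMod (m j)) :=
    { toFun := fun Z => ∑ i, v i • Z i
      map_zero' := by simp
      map_add' := by intro x y; simp [smul_add, Finset.sum_add_distrib] } with hF
  have hFapp : (fun Z : Fin k → ∀ j, ZMod (m j) => ∑ i, v i • Z i) = ⇑F := rfl
  have hne : (Finset.univ.image ⇑F).Nonempty :=
    ⟨F 0, Finset.mem_image_of_mem _ (Finset.mem_univ 0)⟩
  rw [hFapp, pmf_map_uniform_addHom F hne]
  refine uniformOfFinset_congr ?_ hne _
  obtain ⟨c, hc⟩ := gcd_combo Finset.univ v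
  ext z
  simp only [Finset.mem_image, Finset.mem_filter, Finset.mem_univ, true_and]
  constructor
  · rintro ⟨Z, rfl⟩ j
    have hFZ : F Z j = ∑ i, ((v i : ℤ) : ZMod (m j)) * Z i j := by
      simp [hF, Finset.sum_apply, Pi.smul_apply, zsmul_eq_mul, Pi.mul_apply,
        Pi.intCast_apply]
    rw [hFZ]
    refine Finset.dvd_sum fun i _ => ?_
    have h2 : (m j).gcd Gg ∣ (v i).natAbs :=
      (Nat.gcd_dvd_right _ _).trans (Finset.gcd_dvd (Finset.mem_univ i))
    have h1 : (g j : ℤ) ∣ v i := by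
      rw [hg j]
      exact (Int.natCast_dvd_natCast.mpr h2).trans (Int.natAbs_dvd.mpr dvd_rfl)
    have h3 : (g j : ZMod (m j)) ∣ ((v i : ℤ) : ZMod (m j)) := by
      have := map_dvd (Int.castRingHom (ZMod (m j))) h1
      simpa using this
    exact h3.mul_right _
  · intro hz
    choose t ht using hz
    refine ⟨fun i j => ((c i * Int.gcdB (m j) (Gg : ℤ) : ℤ) : ZMod (m j)) * t j, ?_⟩
    funext j
    have hFZ : F (fun i j => ((c i * Int.gcdB (m j) (Gg : ℤ) : ℤ) : ZMod (m j)) * t j) j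
        = ((∑ i, v i * (c i * Int.gcdB (m j) (Gg : ℤ)) : ℤ) : ZMod (m j)) * t j := by
      simp only [hF, AddMonoidHom.coe_mk, ZeroHom.coe_mk, Finset.sum_apply, Pi.smul_apply,
        zsmul_eq_mul, Pi.mul_apply, Pi.intCast_apply]
      push_cast
      rw [Finset.sum_mul]
      exact Finset.sum_congr rfl fun i _ => by ring
    rw [hFZ]
    have hsum : (∑ i, v i * (c i * Int.gcdB (m j) (Gg : ℤ)) : ℤ)
        = (Gg : ℤ) * Int.gcdB (m j) (Gg : ℤ) := by
      rw [show (∑ i, v i * (c i * Int.gcdB (m j) (Gg : ℤ)) : ℤ)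
          = (∑ i, c i * v i) * Int.gcdB (m j) (Gg : ℤ) from by
        rw [Finset.sum_mul]; exact Finset.sum_congr rfl fun i _ => by ring, hc]
    have hbez : ((Nat.gcd (m j) Gg : ℕ) : ℤ)
        = (m j : ℤ) * Int.gcdA (m j) (Gg : ℤ) + (Gg : ℤ) * Int.gcdB (m j) (Gg : ℤ) := by
      have := Int.gcd_eq_gcd_ab (m j : ℤ) (Gg : ℤ)
      rwa [Int.gcd_natCast_natCast] at this
    have hcast : (((Gg : ℤ) * Int.gcdB (m j) (Gg : ℤ) : ℤ) : ZMod (m j))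
        = (g j : ZMod (m j)) := by
      have : ((g j : ℕ) : ZMod (m j))
          = (((m j : ℤ) * Int.gcdA (m j) (Gg : ℤ) + (Gg : ℤ) * Int.gcdB (m j) (Gg : ℤ) : ℤ)
            : ZMod (m j)) := by
        rw [hg j, ← hbez]; push_cast; ring
      rw [this]
      push_cast [ZMod.natCast_self]
      ring
    rw [hsum, hcast, ← ht j]
end

section
/- For every real θ ∈ [−1/2, 1/2] the following chain of inequalities holds: 2(πθ)^2 ≥ 1 − cos(2πθ) ≥ 2·exp(−7π²θ²/18)·(πθ)² ≥ (2/3)·(πθ)². -/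
open Real

private lemma aux_pos (f f' : ℝ → ℝ) (hf : ∀ t, HasDerivAt f (f' t) t)
    (h0 : f 0 = 0) (hd : ∀ t, 0 ≤ t → 0 ≤ f' t) : ∀ t, 0 ≤ t → 0 ≤ f t := by
  intro t ht
  have hm : MonotoneOn f (Set.Ici 0) := by
    apply monotoneOn_of_deriv_nonneg (convex_Ici 0)
      (fun x _ => (hf x).continuousAt.continuousWithinAt)
      (fun x _ => (hf x).differentiableAt.differentiableWithinAt)
    intro x hx
    rw [(hf x).deriv]
    rw [interior_Ici] at hx
    exact hd x (le_of_lt hx)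
  have := hm Set.self_mem_Ici (Set.mem_Ici.2 ht) ht
  rwa [h0] at this

private lemma sin_ge1 : ∀ t : ℝ, 0 ≤ t → t - t^3/6 ≤ Real.sin t := by
  have := aux_pos (fun t => Real.sin t - (t - t^3/6)) (fun t => Real.cos t - (1 - t^2/2))
    (fun t => by
      have h2 : HasDerivAt (fun t : ℝ => t - t^3/6) (1 - t^2/2) t := by
        have h4 := (hasDerivAt_id t).sub ((hasDerivAt_pow 3 t).div_const 6)
        exact h4.congr_deriv (by push_cast; ring)
      exact (Real.hasDerivAt_sin t).sub h2)
    (by norm_num) (fun t ht => by nlinarith [Real.one_sub_sq_div_two_le_cos (x := t)])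
  intro t ht; linarith [this t ht]

private lemma cos_le2 : ∀ t : ℝ, 0 ≤ t → Real.cos t ≤ 1 - t^2/2 + t^4/24 := by
  have := aux_pos (fun t => 1 - t^2/2 + t^4/24 - Real.cos t)
    (fun t => -(t - t^3/6) + Real.sin t)
    (fun t => by
      have h2 : HasDerivAt (fun t : ℝ => 1 - t^2/2 + t^4/24) (-(t - t^3/6)) t := by
        have h4 := (((hasDerivAt_const t (1:ℝ)).sub ((hasDerivAt_pow 2 t).div_const 2)).add
          ((hasDerivAt_pow 4 t).div_const 24))
        exact h4.congr_deriv (by push_cast; ring)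
      have := h2.sub (Real.hasDerivAt_cos t)
      exact this.congr_deriv (by ring)
      )
    (by norm_num) (fun t ht => by linarith [sin_ge1 t ht])
  intro t ht; linarith [this t ht]

private lemma sin_le3 : ∀ t : ℝ, 0 ≤ t → Real.sin t ≤ t - t^3/6 + t^5/120 := by
  have := aux_pos (fun t => t - t^3/6 + t^5/120 - Real.sin t)
    (fun t => (1 - t^2/2 + t^4/24) - Real.cos t)
    (fun t => by
      have h2 : HasDerivAt (fun t : ℝ => t - t^3/6 + t^5/120) (1 - t^2/2 + t^4/24) t := by
        have h4 := (((hasDerivAt_id t).sub ((hasDerivAt_pow 3 t).div_const 6)).add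
          ((hasDerivAt_pow 5 t).div_const 120))
        exact h4.congr_deriv (by push_cast; ring)
      exact h2.sub (Real.hasDerivAt_sin t))
    (by norm_num) (fun t ht => by linarith [cos_le2 t ht])
  intro t ht; linarith [this t ht]

private lemma cos_ge4 : ∀ t : ℝ, 0 ≤ t → 1 - t^2/2 + t^4/24 - t^6/720 ≤ Real.cos t := by
  have := aux_pos (fun t => Real.cos t - (1 - t^2/2 + t^4/24 - t^6/720))
    (fun t => (t - t^3/6 + t^5/120) - Real.sin t)
    (fun t => by
      have h2 : HasDerivAt (fun t : ℝ => 1 - t^2/2 + t^4/24 - t^6/720)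
          (-(t - t^3/6 + t^5/120)) t := by
        have h4 := ((((hasDerivAt_const t (1:ℝ)).sub ((hasDerivAt_pow 2 t).div_const 2)).add
          ((hasDerivAt_pow 4 t).div_const 24)).sub ((hasDerivAt_pow 6 t).div_const 720))
        exact h4.congr_deriv (by push_cast; ring)
      have := (Real.hasDerivAt_cos t).sub h2
      exact this.congr_deriv (by ring))
    (by norm_num) (fun t ht => by linarith [sin_le3 t ht])
  intro t ht; linarith [this t ht]

private lemma sin_ge5 : ∀ t : ℝ, 0 ≤ t → t - t^3/6 + t^5/120 - t^7/5040 ≤ Real.sin t := by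
  have := aux_pos (fun t => Real.sin t - (t - t^3/6 + t^5/120 - t^7/5040))
    (fun t => Real.cos t - (1 - t^2/2 + t^4/24 - t^6/720))
    (fun t => by
      have h2 : HasDerivAt (fun t : ℝ => t - t^3/6 + t^5/120 - t^7/5040)
          (1 - t^2/2 + t^4/24 - t^6/720) t := by
        have h4 := ((((hasDerivAt_id t).sub ((hasDerivAt_pow 3 t).div_const 6)).add
          ((hasDerivAt_pow 5 t).div_const 120)).sub ((hasDerivAt_pow 7 t).div_const 5040))
        exact h4.congr_deriv (by push_cast; ring)
      exact (Real.hasDerivAt_sin t).sub h2)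
    (by norm_num) (fun t ht => by linarith [cos_ge4 t ht])
  intro t ht; linarith [this t ht]

private lemma cos_le6 : ∀ t : ℝ, 0 ≤ t →
    Real.cos t ≤ 1 - t^2/2 + t^4/24 - t^6/720 + t^8/40320 := by
  have := aux_pos (fun t => 1 - t^2/2 + t^4/24 - t^6/720 + t^8/40320 - Real.cos t)
    (fun t => -(t - t^3/6 + t^5/120 - t^7/5040) + Real.sin t)
    (fun t => by
      have h2 : HasDerivAt (fun t : ℝ => 1 - t^2/2 + t^4/24 - t^6/720 + t^8/40320)
          (-(t - t^3/6 + t^5/120 - t^7/5040)) t := by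
        have h4 := (((((hasDerivAt_const t (1:ℝ)).sub ((hasDerivAt_pow 2 t).div_const 2)).add
          ((hasDerivAt_pow 4 t).div_const 24)).sub ((hasDerivAt_pow 6 t).div_const 720)).add
          ((hasDerivAt_pow 8 t).div_const 40320))
        exact h4.congr_deriv (by push_cast; ring)
      have := h2.sub (Real.hasDerivAt_cos t)
      exact this.congr_deriv (by ring))
    (by norm_num) (fun t ht => by linarith [sin_ge5 t ht])
  intro t ht; linarith [this t ht]

set_option maxHeartbeats 1000000

/-- Explicit quantitative two-sided Taylor-type bound for `1 - cos` on `[-π, π]`: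
for `θ ∈ [-1/2, 1/2]`,
`2(πθ)² ≥ 1 - cos(2πθ) ≥ 2·exp(-7π²θ²/18)·(πθ)² ≥ (2/3)(πθ)²`. -/
theorem one_sub_cos_two_pi_bounds (θ : ℝ) (h1 : -(1/2) ≤ θ) (h2 : θ ≤ 1/2) :
    2 * (π * θ)^2 ≥ 1 - Real.cos (2 * π * θ) ∧
      1 - Real.cos (2 * π * θ) ≥ 2 * Real.exp (-(7 * π^2 * θ^2) / 18) * (π * θ)^2 ∧
      2 * Real.exp (-(7 * π^2 * θ^2) / 18) * (π * θ)^2 ≥ (2/3) * (π * θ)^2 := by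
  have hpi : (3.141592 : ℝ) < π := Real.pi_gt_d6
  have hpi' : π < 3.141593 := Real.pi_lt_d6
  have hx2 : (π * θ)^2 ≤ π^2 / 4 := by
    rw [mul_pow]
    have : θ^2 ≤ 1/4 := by nlinarith
    nlinarith [sq_nonneg π]
  set u : ℝ := (π * θ)^2 with hu
  have hu0 : 0 ≤ u := sq_nonneg _
  have huB : u ≤ 2.46741 := by nlinarith
  -- the exponent
  have hexp_eq : -(7 * π^2 * θ^2) / 18 = -(7 * u / 18) := by rw [hu]; ring
  set a : ℝ := 7 * u / 18 with ha
  have ha0 : 0 ≤ a := by positivity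
  -- lower bound for exp a by partial sums
  have hP : 1 + a + a^2/2 + a^3/6 + a^4/24 ≤ Real.exp a := by
    have h5 := Real.sum_le_exp_of_nonneg ha0 5
    have he : (∑ i ∈ Finset.range 5, a ^ i / (Nat.factorial i : ℝ)) =
        1 + a + a^2/2 + a^3/6 + a^4/24 := by
      simp [Finset.sum_range_succ, Nat.factorial]
    rw [he] at h5
    exact h5
  have hPpos : (0:ℝ) < 1 + a + a^2/2 + a^3/6 + a^4/24 := by positivity
  have hexp_le : Real.exp (-a) ≤ 1 / (1 + a + a^2/2 + a^3/6 + a^4/24) := by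
    rw [Real.exp_neg]
    rw [inv_eq_one_div]
    exact one_div_le_one_div_of_le hPpos hP
  -- abs trick: cos(2πθ) = cos |2πθ|
  have habs : Real.cos (2 * π * θ) = Real.cos |2 * π * θ| := (Real.cos_abs _).symm
  set t : ℝ := |2 * π * θ| with hT
  have ht0 : 0 ≤ t := abs_nonneg _
  have ht2 : t^2 = 4 * u := by rw [hT, sq_abs, hu]; ring
  -- part 1
  have part1 : 1 - Real.cos (2 * π * θ) ≤ 2 * u := by
    have := Real.one_sub_sq_div_two_le_cos (x := 2 * π * θ)
    have h2u : (2 * π * θ)^2 = 4 * u := by rw [hu]; ring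
    nlinarith
  -- part 2
  have hcos_up : Real.cos (2 * π * θ) ≤ 1 - t^2/2 + t^4/24 - t^6/720 + t^8/40320 := by
    rw [habs]; exact cos_le6 t ht0
  have hpoly : 1 - Real.cos (2 * π * θ) ≥ 2 * u * (1 - u/3 + 2*u^2/45 - u^3/315) := by
    have h4 : t^4 = 16 * u^2 := by rw [show t^4 = (t^2)^2 by ring, ht2]; ring
    have h6 : t^6 = 64 * u^3 := by rw [show t^6 = (t^2)^3 by ring, ht2]; ring
    have h8 : t^8 = 256 * u^4 := by rw [show t^8 = (t^2)^4 by ring, ht2]; ring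
    nlinarith [hcos_up]
  have hkey : (1 - u/3 + 2*u^2/45 - u^3/315) * (1 + a + a^2/2 + a^3/6 + a^4/24) ≥ 1 := by
    have hp2 : u^2 ≤ 2.46741^2 := pow_le_pow_left₀ hu0 huB 2
    have hp3 : u^3 ≤ 2.46741^3 := pow_le_pow_left₀ hu0 huB 3
    have hp4 : u^4 ≤ 2.46741^4 := pow_le_pow_left₀ hu0 huB 4
    have hp6 : u^6 ≤ 2.46741^6 := pow_le_pow_left₀ hu0 huB 6
    have hg : 0 ≤ 1/18 - 31*u/3240 - 317*u^2/244944 - 2371*u^3/12597120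
        - 4613*u^4/37791360 - 343*u^6/113374080 := by nlinarith
    rw [ha]
    linarith [mul_nonneg hu0 hg, pow_nonneg hu0 6]
  have part2 : 1 - Real.cos (2 * π * θ) ≥ 2 * Real.exp (-(7 * π^2 * θ^2) / 18) * u := by
    rw [hexp_eq]
    have hS : 1 - u/3 + 2*u^2/45 - u^3/315 ≥ Real.exp (-a) := by
      calc Real.exp (-a) ≤ 1 / (1 + a + a^2/2 + a^3/6 + a^4/24) := hexp_le
        _ ≤ 1 - u/3 + 2*u^2/45 - u^3/315 := by
            rw [div_le_iff₀ hPpos]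
            linarith [hkey]
    have := mul_le_mul_of_nonneg_left hS (by positivity : (0:ℝ) ≤ 2*u)
    nlinarith [hpoly]
  -- part 3
  have part3 : 2 * Real.exp (-(7 * π^2 * θ^2) / 18) * u ≥ (2/3) * u := by
    rw [hexp_eq]
    have haB : a ≤ 1 := by rw [ha]; nlinarith
    have h3 : Real.exp a ≤ 3 := by
      calc Real.exp a ≤ Real.exp 1 := Real.exp_le_exp.2 haB
        _ ≤ 2.7182818286 := Real.exp_one_lt_d9.le
        _ ≤ 3 := by norm_num
    have : Real.exp (-a) ≥ 1/3 := by
      rw [Real.exp_neg, ge_iff_le, le_inv_comm₀ (by norm_num) (Real.exp_pos a)]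
      simpa using h3
    nlinarith
  exact ⟨part1, part2, part3⟩
end

section
/- Let d ≥ 1, m : Fin d → ℕ with m_j ≥ 1, G = Π_j ZMod (m_j), k ≥ 1, and Z : Fin k → G. Define P : Matrix G G ℝ by P(g, h) = (1/(2k))·( #{i : Z_i = h − g} + #{i : Z_i = g − h} ). For x ∈ G define f_x : G → ℝ by f_x(y) = cos( 2π·Σ_j x_j·y_j / m_j ), where x_j, y_j ∈ {0, …, m_j − 1} are integer representatives of the coordinates, and define λ_x = (1/k)·Σ_{i=1}^k cos( 2π·Σ_j x_j·(Z_i)_j / m_j ). Then for every x ∈ G, P.mulVec f_x = λ_x • f_x. -/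
open Real
open scoped Classical

section aux
variable {d : ℕ} {m : Fin d → ℕ} [∀ j, NeZero (m j)]

noncomputable def Sfun (m : Fin d → ℕ) [∀ j, NeZero (m j)] (x y : ∀ j, ZMod (m j)) : ℝ :=
  ∑ j, ((x j).val : ℝ) * ((y j).val : ℝ) / (m j)

lemma Sfun_add (x y z : ∀ j, ZMod (m j)) :
    ∃ N : ℕ, Sfun m x (y + z) = Sfun m x y + Sfun m x z - N := by
  have h : ∀ j : Fin d, ∃ q : ℕ,
      ((x j).val : ℝ) * (((y + z) j).val : ℝ) / (m j)
        = ((x j).val : ℝ) * ((y j).val : ℝ) / (m j)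
          + ((x j).val : ℝ) * ((z j).val : ℝ) / (m j) - ((x j).val * q : ℕ) := by
    intro j
    refine ⟨((y j).val + (z j).val) / m j, ?_⟩
    have hv : ((y j).val + (z j).val) = ((y + z) j).val + m j * (((y j).val + (z j).val) / m j) := by
      show _ = ((y j) + (z j)).val + _
      rw [ZMod.val_add]
      exact (Nat.mod_add_div _ _).symm
    have hmpos : (0:ℝ) < (m j : ℝ) := by
      exact_mod_cast Nat.pos_of_ne_zero (NeZero.ne (m j))
    have hv' : (((y + z) j).val : ℝ) = ((y j).val : ℝ) + ((z j).val : ℝ)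
        - (m j : ℝ) * (((y j).val + (z j).val) / m j : ℕ) := by
      have := congrArg (fun n : ℕ => (n : ℝ)) hv
      push_cast at this ⊢
      linarith
    rw [hv']
    field_simp
    push_cast; ring
  choose q hq using h
  refine ⟨∑ j, (x j).val * q j, ?_⟩
  unfold Sfun
  rw [Finset.sum_congr rfl fun j _ => hq j]
  push_cast
  rw [Finset.sum_sub_distrib, Finset.sum_add_distrib]

lemma cos_key (x y z : ∀ j, ZMod (m j)) :
    Real.cos (2 * π * Sfun m x (y + z)) + Real.cos (2 * π * Sfun m x (y - z))
      = 2 * Real.cos (2 * π * Sfun m x y) * Real.cos (2 * π * Sfun m x z) := by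
  obtain ⟨N, hN⟩ := Sfun_add x (y - z) z
  rw [sub_add_cancel] at hN
  obtain ⟨M, hM⟩ := Sfun_add x y z
  have h1 : Real.cos (2 * π * Sfun m x (y + z))
      = Real.cos (2 * π * Sfun m x y + 2 * π * Sfun m x z) := by
    rw [hM]
    have he : 2 * π * (Sfun m x y + Sfun m x z - M)
        = (2 * π * Sfun m x y + 2 * π * Sfun m x z) - (M : ℤ) * (2 * π) := by
      push_cast; ring
    rw [he, Real.cos_sub_int_mul_two_pi]
  have h2 : Real.cos (2 * π * Sfun m x (y - z))
      = Real.cos (2 * π * Sfun m x y - 2 * π * Sfun m x z) := by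
    have he : 2 * π * Sfun m x (y - z)
        = (2 * π * Sfun m x y - 2 * π * Sfun m x z) + (N : ℤ) * (2 * π) := by
      have h3 : Sfun m x (y - z) = Sfun m x y - Sfun m x z + N := by linarith
      rw [h3]; push_cast; ring
    rw [he, Real.cos_add_int_mul_two_pi]
  rw [h1, h2, Real.cos_add, Real.cos_sub]
  ring

end aux

/-- Eigenstructure of the simple random walk on the Cayley multigraph of the
torus `G = Π_j ZMod (m j)` with generator tuple `Z`: for each `x ∈ G` the
cosine character `f_x(y) = cos(2π ∑_j x_j y_j / m_j)` is an eigenvector of the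
transition matrix `P` with eigenvalue
`λ_x = (1/k)·∑ᵢ cos(2π ∑_j x_j (Zᵢ)_j / m_j)`. -/
theorem cayley_torus_eigenvectors (d : ℕ) (hd : 1 ≤ d) (m : Fin d → ℕ)
    (hm : ∀ j, 1 ≤ m j) [∀ j, NeZero (m j)] (k : ℕ) (hk : 1 ≤ k)
    (Z : Fin k → ∀ j, ZMod (m j)) :
    let P : Matrix (∀ j, ZMod (m j)) (∀ j, ZMod (m j)) ℝ := fun g h =>
      (1/(2*(k:ℝ))) * (((Finset.univ.filter fun i => Z i = h - g).card : ℝ) +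
        ((Finset.univ.filter fun i => Z i = g - h).card : ℝ))
    ∀ x : ∀ j, ZMod (m j),
      P.mulVec (fun y => Real.cos (2 * π * ∑ j, ((x j).val : ℝ) * ((y j).val : ℝ) / (m j))) =
        ((1/(k:ℝ)) * ∑ i, Real.cos (2 * π * ∑ j, ((x j).val : ℝ) * (((Z i) j).val : ℝ) / (m j))) •
          (fun y => Real.cos (2 * π * ∑ j, ((x j).val : ℝ) * ((y j).val : ℝ) / (m j))) := by
  intro P x
  funext y
  have hkpos : (0:ℝ) < (k:ℝ) := by exact_mod_cast hk
  have F : (∀ j, ZMod (m j)) → ℝ := fun w => Real.cos (2 * π * Sfun m x w)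
  show ∑ h, P y h * Real.cos (2 * π * Sfun m x h)
      = ((1/(k:ℝ)) * ∑ i, Real.cos (2 * π * Sfun m x (Z i))) * Real.cos (2 * π * Sfun m x y)
  have hc1 : ∀ h : ∀ j, ZMod (m j),
      ((Finset.univ.filter fun i => Z i = h - y).card : ℝ)
        = ∑ i, if h = y + Z i then (1:ℝ) else 0 := by
    intro h
    rw [Finset.card_filter]
    push_cast
    refine Finset.sum_congr rfl fun i _ => ?_
    congr 1
    simp only [eq_iff_iff]
    constructor
    · intro he; rw [he]; abel
    · intro he; rw [he]; abel
  have hc2 : ∀ h : ∀ j, ZMod (m j),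
      ((Finset.univ.filter fun i => Z i = y - h).card : ℝ)
        = ∑ i, if h = y - Z i then (1:ℝ) else 0 := by
    intro h
    rw [Finset.card_filter]
    push_cast
    refine Finset.sum_congr rfl fun i _ => ?_
    congr 1
    simp only [eq_iff_iff]
    constructor
    · intro he; rw [he]; abel
    · intro he; rw [he]; abel
  calc ∑ h, P y h * Real.cos (2 * π * Sfun m x h)
      = ∑ h, ∑ i, (1/(2*(k:ℝ))) *
          ((if h = y + Z i then Real.cos (2 * π * Sfun m x h) else 0)
            + (if h = y - Z i then Real.cos (2 * π * Sfun m x h) else 0)) := by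
        refine Finset.sum_congr rfl fun h _ => ?_
        show (1/(2*(k:ℝ))) * (((Finset.univ.filter fun i => Z i = h - y).card : ℝ) +
            ((Finset.univ.filter fun i => Z i = y - h).card : ℝ)) * Real.cos (2 * π * Sfun m x h) = _
        rw [hc1 h, hc2 h, ← Finset.sum_add_distrib, Finset.mul_sum, Finset.sum_mul]
        refine Finset.sum_congr rfl fun i _ => ?_
        split_ifs <;> ring
    _ = ∑ i, ∑ h, (1/(2*(k:ℝ))) *
          ((if h = y + Z i then Real.cos (2 * π * Sfun m x h) else 0)
            + (if h = y - Z i then Real.cos (2 * π * Sfun m x h) else 0)) := Finset.sum_comm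
    _ = ∑ i, (1/(2*(k:ℝ))) *
          (Real.cos (2 * π * Sfun m x (y + Z i)) + Real.cos (2 * π * Sfun m x (y - Z i))) := by
        refine Finset.sum_congr rfl fun i _ => ?_
        rw [← Finset.mul_sum, Finset.sum_add_distrib, Finset.sum_ite_eq', Finset.sum_ite_eq']
        simp
    _ = ∑ i, (1/(2*(k:ℝ))) *
          (2 * Real.cos (2 * π * Sfun m x y) * Real.cos (2 * π * Sfun m x (Z i))) := by
        refine Finset.sum_congr rfl fun i _ => ?_
        rw [cos_key]
    _ = ((1/(k:ℝ)) * ∑ i, Real.cos (2 * π * Sfun m x (Z i))) * Real.cos (2 * π * Sfun m x y) := by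
        rw [← Finset.mul_sum, ← Finset.mul_sum]
        field_simp
end

section
/- Let ℓ ≥ 1 be an integer and θ = π/(2ℓ). Let J = {x ∈ ℤ : |x| ≤ ℓ − 1}, regarded as a finite index set, and let A : Matrix J J ℝ be given by A(x, y) = 1/2 if |x − y| = 1 and A(x, y) = 0 otherwise. For i ∈ ℕ set q_i = Σ_{y ∈ J} (A^i)(0, y). Then for every real s ≥ 0, Σ_{i=0}^∞ e^{−s}·s^i/i! · q_i ≥ exp( −(1 − cos θ)·s ). -/
open Real

section Aux

variable (ℓ : ℕ)

noncomputable def Jset : Finset ℤ := Finset.Icc (1 - (ℓ : ℤ)) ((ℓ : ℤ) - 1)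

noncomputable def Amat : Matrix (Jset ℓ) (Jset ℓ) ℝ := fun x y => if |x.1 - y.1| = 1 then 1/2 else 0

lemma sum_row (f : ℤ → ℝ) (x : Jset ℓ) :
    ∑ y : Jset ℓ, Amat ℓ x y * f y.1 =
      (if (x.1 - 1) ∈ Jset ℓ then f (x.1 - 1) / 2 else 0) +
      (if (x.1 + 1) ∈ Jset ℓ then f (x.1 + 1) / 2 else 0) := by
  have h : ∑ y : Jset ℓ, Amat ℓ x y * f y.1 =
      ∑ t ∈ Jset ℓ, (if |x.1 - t| = 1 then (1:ℝ)/2 else 0) * f t :=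
    Finset.sum_coe_sort (Jset ℓ) (fun t => (if |x.1 - t| = 1 then (1:ℝ)/2 else 0) * f t)
  rw [h]
  have key : ∀ t ∈ Jset ℓ, (if |x.1 - t| = 1 then (1:ℝ)/2 else 0) * f t =
      (if t = x.1 - 1 then f t / 2 else 0) + (if t = x.1 + 1 then f t / 2 else 0) := by
    intro t _
    have habs : |x.1 - t| = 1 ↔ (t = x.1 - 1 ∨ t = x.1 + 1) := by
      rw [abs_eq (by norm_num : (0:ℤ) ≤ 1)]; omega
    by_cases h1 : t = x.1 - 1
    · have : ¬ t = x.1 + 1 := by omega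
      simp [h1, this, habs]
      rw [if_neg (by omega)]
      ring
    · by_cases h2 : t = x.1 + 1
      · simp [h1, h2, habs]
        rw [if_neg (by omega)]
        ring
      · have : ¬ |x.1 - t| = 1 := by rw [habs]; tauto
        simp [h1, h2, this]
  rw [Finset.sum_congr rfl key, Finset.sum_add_distrib,
    Finset.sum_ite_eq' (Jset ℓ) (x.1 - 1) (fun t => f t / 2),
    Finset.sum_ite_eq' (Jset ℓ) (x.1 + 1) (fun t => f t / 2)]

lemma eigen (hℓ : 1 ≤ ℓ) (x : Jset ℓ) :
    ∑ y : Jset ℓ, Amat ℓ x y * Real.cos (π / (2 * (ℓ : ℝ)) * y.1) =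
      Real.cos (π / (2 * (ℓ : ℝ))) * Real.cos (π / (2 * (ℓ : ℝ)) * x.1) := by
  set θ : ℝ := π / (2 * (ℓ : ℝ)) with hθ
  have hℓR : (ℓ : ℝ) ≠ 0 := by positivity
  have hθℓ : θ * (ℓ : ℝ) = π / 2 := by field_simp [hθ]; rw [hθ]; field_simp
  have hx := Finset.mem_Icc.mp x.2
  rw [sum_row ℓ (fun t => Real.cos (θ * t)) x]
  have hleft : (if (x.1 - 1) ∈ Jset ℓ then Real.cos (θ * ((x.1:ℝ) - 1)) / 2 else 0)
      = Real.cos (θ * ((x.1:ℝ) - 1)) / 2 := by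
    by_cases h : (x.1 - 1) ∈ Jset ℓ
    · simp [h]
    · have hx1 : x.1 = 1 - (ℓ:ℤ) := by
        simp only [Jset, Finset.mem_Icc] at h; omega
      have : θ * ((x.1:ℝ) - 1) = -(π/2) := by
        have : ((x.1:ℝ)) = 1 - (ℓ:ℝ) := by exact_mod_cast congrArg (Int.cast : ℤ → ℝ) hx1
        rw [this]; rw [show θ * (1 - (ℓ:ℝ) - 1) = -(θ * ℓ) by ring, hθℓ]
      simp [h, this]
  have hright : (if (x.1 + 1) ∈ Jset ℓ then Real.cos (θ * ((x.1:ℝ) + 1)) / 2 else 0)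
      = Real.cos (θ * ((x.1:ℝ) + 1)) / 2 := by
    by_cases h : (x.1 + 1) ∈ Jset ℓ
    · simp [h]
    · have hx1 : x.1 = (ℓ:ℤ) - 1 := by
        simp only [Jset, Finset.mem_Icc] at h; omega
      have : θ * ((x.1:ℝ) + 1) = π/2 := by
        have : ((x.1:ℝ)) = (ℓ:ℝ) - 1 := by exact_mod_cast congrArg (Int.cast : ℤ → ℝ) hx1
        rw [this, show θ * ((ℓ:ℝ) - 1 + 1) = θ * ℓ by ring, hθℓ]
      simp [h, this]
  have hc1 : Real.cos (θ * ((x.1:ℝ) - 1)) = Real.cos (θ * x.1 - θ) := by ring_nf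
  have hc2 : Real.cos (θ * ((x.1:ℝ) + 1)) = Real.cos (θ * x.1 + θ) := by ring_nf
  push_cast
  rw [hleft, hright, hc1, hc2, Real.cos_sub, Real.cos_add]
  ring

lemma Amat_nonneg (x y : Jset ℓ) : 0 ≤ Amat ℓ x y := by
  unfold Amat; split <;> norm_num

lemma pow_nonneg' (i : ℕ) (x y : Jset ℓ) : 0 ≤ (Amat ℓ ^ i) x y := by
  induction i generalizing x y with
  | zero => simp [Matrix.one_apply]; split <;> norm_num
  | succ n ih =>
    rw [pow_succ, Matrix.mul_apply]
    exact Finset.sum_nonneg fun k _ => mul_nonneg (ih x k) (Amat_nonneg ℓ k y)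

lemma rowsum_le_one (x : Jset ℓ) : ∑ y : Jset ℓ, Amat ℓ x y ≤ 1 := by
  have h : ∑ y : Jset ℓ, Amat ℓ x y = ∑ y : Jset ℓ, Amat ℓ x y * (fun _ : ℤ => (1:ℝ)) y.1 := by
    simp
  rw [h, sum_row ℓ (fun _ => (1:ℝ)) x]
  have h1 : (if (x.1 - 1) ∈ Jset ℓ then (1:ℝ) / 2 else 0) ≤ 1/2 := by split <;> norm_num
  have h2 : (if (x.1 + 1) ∈ Jset ℓ then (1:ℝ) / 2 else 0) ≤ 1/2 := by split <;> norm_num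
  linarith

lemma q_le_one (i : ℕ) (x : Jset ℓ) : ∑ y : Jset ℓ, (Amat ℓ ^ i) x y ≤ 1 := by
  induction i generalizing x with
  | zero => simp [Matrix.one_apply]
  | succ n ih =>
    calc ∑ y : Jset ℓ, (Amat ℓ ^ (n+1)) x y
        = ∑ k : Jset ℓ, Amat ℓ x k * ∑ y : Jset ℓ, (Amat ℓ ^ n) k y := by
          rw [pow_succ']
          simp only [Matrix.mul_apply, Finset.mul_sum]
          rw [Finset.sum_comm]
      _ ≤ ∑ k : Jset ℓ, Amat ℓ x k * 1 := by
          apply Finset.sum_le_sum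
          intro k _
          exact mul_le_mul_of_nonneg_left (ih k) (Amat_nonneg ℓ x k)
      _ ≤ 1 := by simpa using rowsum_le_one ℓ x

lemma eigen_pow (hℓ : 1 ≤ ℓ) (i : ℕ) (x : Jset ℓ) :
    ∑ y : Jset ℓ, (Amat ℓ ^ i) x y * Real.cos (π / (2 * (ℓ : ℝ)) * y.1) =
      Real.cos (π / (2 * (ℓ : ℝ))) ^ i * Real.cos (π / (2 * (ℓ : ℝ)) * x.1) := by
  induction i generalizing x with
  | zero => simp [Matrix.one_apply, Finset.sum_ite_eq]
  | succ n ih =>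
    calc ∑ y : Jset ℓ, (Amat ℓ ^ (n+1)) x y * Real.cos (π / (2 * (ℓ : ℝ)) * y.1)
        = ∑ k : Jset ℓ, (Amat ℓ ^ n) x k *
            ∑ y : Jset ℓ, Amat ℓ k y * Real.cos (π / (2 * (ℓ : ℝ)) * y.1) := by
          rw [pow_succ]
          simp only [Matrix.mul_apply, Finset.sum_mul, Finset.mul_sum]
          rw [Finset.sum_comm]
          congr 1; ext k; congr 1; ext y; ring
      _ = Real.cos (π / (2 * (ℓ : ℝ))) *
            ∑ k : Jset ℓ, (Amat ℓ ^ n) x k * Real.cos (π / (2 * (ℓ : ℝ)) * k.1) := by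
          rw [Finset.mul_sum]
          apply Finset.sum_congr rfl
          intro k _
          rw [eigen ℓ hℓ k]; ring
      _ = Real.cos (π / (2 * (ℓ : ℝ))) ^ (n+1) * Real.cos (π / (2 * (ℓ : ℝ)) * x.1) := by
          rw [ih x]; ring

end Aux

/-- Survival probability lower bound for the continuous-time simple random walk
killed upon exiting `(-ℓ, ℓ)`: with `A` the substochastic transition matrix of
the killed discrete walk on `J = {x : |x| ≤ ℓ - 1}` and
`q_i = ∑_{y ∈ J} (A^i)(0, y)` the `i`-step survival probability, for all
`s ≥ 0` one has `∑_i e^{-s} s^i / i! · q_i ≥ exp(-(1 - cos(π/(2ℓ)))·s)`. -/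
theorem killed_srw_survival_lower (ℓ : ℕ) (hℓ : 1 ≤ ℓ) (s : ℝ) (hs : 0 ≤ s) :
    let θ : ℝ := π / (2 * (ℓ : ℝ))
    let J : Finset ℤ := Finset.Icc (1 - (ℓ : ℤ)) ((ℓ : ℤ) - 1)
    let A : Matrix J J ℝ := fun x y => if |x.1 - y.1| = 1 then 1/2 else 0
    let z : J := ⟨0, Finset.mem_Icc.mpr ⟨by omega, by omega⟩⟩
    ∑' i : ℕ, Real.exp (-s) * s ^ i / (Nat.factorial i : ℝ) * (∑ y : J, (A ^ i) z y) ≥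
      Real.exp (-(1 - Real.cos θ) * s) := by
  intro θ J A z
  set c : ℝ := Real.cos θ with hc
  have hθpos : 0 < θ := by
    have : (0:ℝ) < (ℓ:ℝ) := by exact_mod_cast hℓ
    exact div_pos Real.pi_pos (by linarith)
  have hθle : θ ≤ π / 2 := by
    have h1 : (1:ℝ) ≤ (ℓ:ℝ) := by exact_mod_cast hℓ
    rw [div_le_div_iff₀ (by linarith) (by norm_num)]
    nlinarith [Real.pi_pos]
  have hcnn : 0 ≤ c := Real.cos_nonneg_of_mem_Icc ⟨by linarith, hθle⟩
  -- key pointwise bound: c ^ i ≤ q i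
  have hq_lb : ∀ i : ℕ, c ^ i ≤ ∑ y : J, (A ^ i) z y := by
    intro i
    have h1 := eigen_pow ℓ hℓ i z
    have hz : Real.cos (π / (2 * (ℓ : ℝ)) * (z.1 : ℝ)) = 1 := by
      show Real.cos (π / (2 * (ℓ : ℝ)) * ((0:ℤ) : ℝ)) = 1
      norm_num
    rw [hz, mul_one] at h1
    calc c ^ i = ∑ y : J, (A ^ i) z y * Real.cos (π / (2 * (ℓ : ℝ)) * y.1) := h1.symm
      _ ≤ ∑ y : J, (A ^ i) z y := by
          apply Finset.sum_le_sum
          intro y _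
          calc (Amat ℓ ^ i) z y * Real.cos (π / (2 * (ℓ : ℝ)) * y.1)
              ≤ (Amat ℓ ^ i) z y * 1 :=
                mul_le_mul_of_nonneg_left (Real.cos_le_one _) (pow_nonneg' ℓ i z y)
            _ = (Amat ℓ ^ i) z y := mul_one _
  have hq_nn : ∀ i : ℕ, 0 ≤ ∑ y : J, (A ^ i) z y := fun i =>
    Finset.sum_nonneg fun y _ => pow_nonneg' ℓ i z y
  -- summabilities
  have hf : Summable (fun i : ℕ => Real.exp (-s) * ((s * c) ^ i / (Nat.factorial i : ℝ))) :=
    (Real.summable_pow_div_factorial (s * c)).mul_left _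
  have hfg : ∀ i : ℕ, Real.exp (-s) * ((s * c) ^ i / (Nat.factorial i : ℝ)) ≤
      Real.exp (-s) * s ^ i / (Nat.factorial i : ℝ) * (∑ y : J, (A ^ i) z y) := by
    intro i
    have h1 : Real.exp (-s) * ((s * c) ^ i / (Nat.factorial i : ℝ)) =
        Real.exp (-s) * s ^ i / (Nat.factorial i : ℝ) * c ^ i := by
      rw [mul_pow]; field_simp
    rw [h1]
    exact mul_le_mul_of_nonneg_left (hq_lb i)
      (div_nonneg (mul_nonneg (Real.exp_nonneg _) (pow_nonneg hs i)) (Nat.cast_nonneg _))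
  have hgle : ∀ i : ℕ, Real.exp (-s) * s ^ i / (Nat.factorial i : ℝ) *
      (∑ y : J, (A ^ i) z y) ≤ Real.exp (-s) * (s ^ i / (Nat.factorial i : ℝ)) := by
    intro i
    calc Real.exp (-s) * s ^ i / (Nat.factorial i : ℝ) * (∑ y : J, (A ^ i) z y)
        ≤ Real.exp (-s) * s ^ i / (Nat.factorial i : ℝ) * 1 := by
          exact mul_le_mul_of_nonneg_left (q_le_one ℓ i z)
            (div_nonneg (mul_nonneg (Real.exp_nonneg _) (pow_nonneg hs i)) (Nat.cast_nonneg _))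
      _ = Real.exp (-s) * (s ^ i / (Nat.factorial i : ℝ)) := by ring
  have hg : Summable (fun i : ℕ => Real.exp (-s) * s ^ i / (Nat.factorial i : ℝ) *
      (∑ y : J, (A ^ i) z y)) := by
    apply Summable.of_nonneg_of_le (fun i => mul_nonneg
      (div_nonneg (mul_nonneg (Real.exp_nonneg _) (pow_nonneg hs i)) (Nat.cast_nonneg _))
      (hq_nn i)) hgle
    exact (Real.summable_pow_div_factorial s).mul_left _
  have hle := Summable.tsum_le_tsum hfg hf hg
  have hexp : ∑' i : ℕ, Real.exp (-s) * ((s * c) ^ i / (Nat.factorial i : ℝ)) =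
      Real.exp (-(1 - c) * s) := by
    rw [tsum_mul_left]
    have : ∑' i : ℕ, (s * c) ^ i / (Nat.factorial i : ℝ) = Real.exp (s * c) := by
      rw [Real.exp_eq_exp_ℝ, NormedSpace.exp_eq_tsum_div]
    rw [this, ← Real.exp_add]
    congr 1
    ring
  rw [hexp] at hle
  exact hle
end

section
/- For s > 0 let p_s : ℕ → ℝ be the Poisson probability mass function p_s(x) = e^{−s}·s^x/x!. There exist constants c > 0 and C > 0 such that for every s ∈ (0, ∞) and every real r with r ≥ √s and s + r ∈ ℕ, writing N = s + r, one has c·r·(min(r/s, 1))·log(max(r/s, e)) ≤ −log( Σ_{x ≥ N} p_s(x) ) ≤ C·r·(min(r/s, 1))·log(max(r/s, e)). -/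
open Real


lemma pt_summable {s : ℝ} (hs : 0 ≤ s) (N : ℕ) :
    Summable (fun x : ℕ => if N ≤ x then Real.exp (-s) * s ^ x / (Nat.factorial x : ℝ) else 0) := by
  refine Summable.of_nonneg_of_le ?_ ?_ ((Real.summable_pow_div_factorial s).mul_left (Real.exp (-s)))
  · intro x; split <;> positivity
  · intro x; split
    · rw [mul_div_assoc]
    · positivity

lemma pt_term_le {s : ℝ} (hs : 0 ≤ s) (N : ℕ) :
    Real.exp (-s) * s ^ N / (Nat.factorial N : ℝ) ≤
      ∑' x : ℕ, if N ≤ x then Real.exp (-s) * s ^ x / (Nat.factorial x : ℝ) else 0 := by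
  have h := Summable.le_tsum (pt_summable hs N) N (fun j _ => by split <;> positivity)
  simpa using h

lemma pt_chernoff {s : ℝ} (hs : 0 < s) {N : ℕ} (hN : s ≤ N) :
    (∑' x : ℕ, if N ≤ x then Real.exp (-s) * s ^ x / (Nat.factorial x : ℝ) else 0)
      ≤ Real.exp ((N : ℝ) - s) * (s / N) ^ N := by
  have hN0 : (0:ℝ) < N := lt_of_lt_of_le hs hN
  have hsum : HasSum (fun x : ℕ => ((N:ℝ)) ^ x / (Nat.factorial x : ℝ)) (Real.exp N) := by
    rw [Real.exp_eq_exp_ℝ]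
    exact NormedSpace.expSeries_div_hasSum_exp (N:ℝ)
  have hg : HasSum (fun x : ℕ => Real.exp (-s) * (s / N) ^ N * ((N:ℝ) ^ x / (Nat.factorial x : ℝ)))
      (Real.exp (-s) * (s / N) ^ N * Real.exp N) := hsum.mul_left _
  have hle : ∀ x : ℕ, (if N ≤ x then Real.exp (-s) * s ^ x / (Nat.factorial x : ℝ) else 0)
      ≤ Real.exp (-s) * (s / N) ^ N * ((N:ℝ) ^ x / (Nat.factorial x : ℝ)) := by
    intro x
    split
    · rename_i hx
      have hxN : N + (x - N) = x := Nat.add_sub_cancel' hx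
      have h1 : s ^ x = s ^ N * s ^ (x - N) := by rw [← pow_add, hxN]
      have h2 : ((N:ℝ)) ^ x = (N:ℝ) ^ N * (N:ℝ) ^ (x - N) := by rw [← pow_add, hxN]
      have key : s ^ x ≤ (s/N)^N * (N:ℝ)^x := by
        calc s ^ x = s ^ N * s ^ (x-N) := h1
          _ ≤ s ^ N * (N:ℝ) ^ (x-N) :=
              mul_le_mul_of_nonneg_left (pow_le_pow_left₀ hs.le hN _) (by positivity)
          _ = (s/N)^N * (N:ℝ)^x := by rw [div_pow, h2]; field_simp
      have hrw : Real.exp (-s) * (s/N)^N * ((N:ℝ)^x / (Nat.factorial x : ℝ))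
          = Real.exp (-s) * ((s/N)^N * (N:ℝ)^x) / (Nat.factorial x : ℝ) := by ring
      rw [hrw]
      gcongr
    · positivity
  have h := Summable.tsum_le_tsum hle (pt_summable hs.le N) hg.summable
  rw [hg.tsum_eq] at h
  refine h.trans (le_of_eq ?_)
  rw [Real.exp_sub, Real.exp_neg]
  ring

lemma pt_fact_le (N M : ℕ) : ∀ k, k ≤ M → Nat.factorial (N + k) ≤ Nat.factorial N * (N + M) ^ k := by
  intro k
  induction k with
  | zero => simp
  | succ k ih =>
    intro hk
    have hk' : k ≤ M := Nat.le_of_succ_le hk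
    have : N + (k+1) = (N + k) + 1 := by omega
    rw [this, Nat.factorial_succ, pow_succ]
    calc (N + k + 1) * Nat.factorial (N + k) ≤ (N + M) * (Nat.factorial N * (N + M) ^ k) :=
          Nat.mul_le_mul (by omega) (ih hk')
      _ = Nat.factorial N * ((N + M) ^ k * (N + M)) := by ring

-- each term in the window is at least term_N * (s/(N+M))^M
lemma pt_window_term {s : ℝ} (hs : 0 < s) {N M : ℕ} (hsN : s ≤ N) (hM : 1 ≤ M)
    {x : ℕ} (hx1 : N ≤ x) (hx2 : x < N + M) :
    Real.exp (-s) * s ^ N / (Nat.factorial N : ℝ) * (s / (N + M)) ^ M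
      ≤ Real.exp (-s) * s ^ x / (Nat.factorial x : ℝ) := by
  have hN0 : (0:ℝ) < N := lt_of_lt_of_le hs hsN
  have hNM : (0:ℝ) < ((N:ℝ) + M) := by positivity
  set k := x - N with hk
  have hxk : x = N + k := by omega
  have hkM : k ≤ M := by omega
  have hfact : (Nat.factorial x : ℝ) ≤ (Nat.factorial N : ℝ) * ((N:ℝ) + M) ^ k := by
    have := pt_fact_le N M k hkM
    rw [hxk]
    calc (Nat.factorial (N + k) : ℝ) ≤ ((Nat.factorial N * (N + M) ^ k : ℕ) : ℝ) := by
          exact_mod_cast this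
      _ = (Nat.factorial N : ℝ) * ((N:ℝ) + M) ^ k := by push_cast; ring
  have hratio : s / ((N:ℝ) + M) ≤ 1 := by
    rw [div_le_one hNM]
    calc s ≤ (N:ℝ) := hsN
      _ ≤ (N:ℝ) + M := le_add_of_nonneg_right (by positivity)
  have hpow : (s / ((N:ℝ) + M)) ^ M ≤ (s / ((N:ℝ) + M)) ^ k :=
    pow_le_pow_of_le_one (by positivity) hratio hkM
  calc Real.exp (-s) * s ^ N / (Nat.factorial N : ℝ) * (s / (N + M)) ^ M
      ≤ Real.exp (-s) * s ^ N / (Nat.factorial N : ℝ) * (s / (N + M)) ^ k := by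
        apply mul_le_mul_of_nonneg_left hpow (by positivity)
    _ = Real.exp (-s) * s ^ (N + k) / ((Nat.factorial N : ℝ) * ((N:ℝ) + M) ^ k) := by
        rw [div_pow, pow_add]
        field_simp
    _ ≤ Real.exp (-s) * s ^ (N + k) / (Nat.factorial x : ℝ) := by
        apply div_le_div_of_nonneg_left (by positivity) (by positivity) hfact
    _ = Real.exp (-s) * s ^ x / (Nat.factorial x : ℝ) := by rw [hxk]

lemma pt_window_le {s : ℝ} (hs : 0 < s) {N M : ℕ} (hsN : s ≤ N) (hM : 1 ≤ M) :
    (M : ℝ) * (Real.exp (-s) * s ^ N / (Nat.factorial N : ℝ) * (s / (N + M)) ^ M)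
      ≤ ∑' x : ℕ, if N ≤ x then Real.exp (-s) * s ^ x / (Nat.factorial x : ℝ) else 0 := by
  have hsum := pt_summable hs.le N
  have h1 : ∑ x ∈ Finset.Ico N (N + M),
      (if N ≤ x then Real.exp (-s) * s ^ x / (Nat.factorial x : ℝ) else 0)
      ≤ ∑' x : ℕ, if N ≤ x then Real.exp (-s) * s ^ x / (Nat.factorial x : ℝ) else 0 :=
    Summable.sum_le_tsum _ (fun j _ => by split <;> positivity) hsum
  refine le_trans ?_ h1
  have h2 : ∀ x ∈ Finset.Ico N (N + M),
      Real.exp (-s) * s ^ N / (Nat.factorial N : ℝ) * (s / (N + M)) ^ M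
        ≤ (if N ≤ x then Real.exp (-s) * s ^ x / (Nat.factorial x : ℝ) else 0) := by
    intro x hx
    rw [Finset.mem_Ico] at hx
    rw [if_pos hx.1]
    exact pt_window_term hs hsN hM hx.1 hx.2
  have := Finset.card_nsmul_le_sum _ _ _ h2
  rwa [Nat.card_Ico, Nat.add_sub_cancel_left, nsmul_eq_mul] at this


lemma pt_stirling {N : ℕ} (hN : 1 ≤ N) :
    (Nat.factorial N : ℝ) ≤ Real.exp 1 * Real.sqrt N * ((N : ℝ) / Real.exp 1) ^ N := by
  have hNpred : N - 1 + 1 = N := Nat.succ_pred_eq_of_pos hN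
  have hanti := Stirling.stirlingSeq'_antitone (Nat.zero_le (N - 1))
  simp only [Function.comp_apply, Nat.succ_eq_add_one, hNpred, Nat.zero_add] at hanti
  rw [Stirling.stirlingSeq_one] at hanti
  -- hanti : stirlingSeq N ≤ exp 1 / √2
  have hN0 : (0:ℝ) < N := by exact_mod_cast hN
  have hdef : Stirling.stirlingSeq N = (Nat.factorial N : ℝ) / (Real.sqrt (2 * N) * ((N:ℝ) / Real.exp 1) ^ N) := rfl
  have hden : (0:ℝ) < Real.sqrt (2 * N) * ((N:ℝ) / Real.exp 1) ^ N := by positivity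
  rw [hdef, div_le_div_iff₀ hden (by positivity : (0:ℝ) < Real.sqrt 2)] at hanti
  have hsqrt : Real.sqrt (2 * N) = Real.sqrt 2 * Real.sqrt N := Real.sqrt_mul (by norm_num) _
  calc (Nat.factorial N : ℝ)
      = (Nat.factorial N : ℝ) * Real.sqrt 2 / Real.sqrt 2 := by
        field_simp
    _ ≤ Real.exp 1 * (Real.sqrt (2 * N) * ((N:ℝ) / Real.exp 1) ^ N) / Real.sqrt 2 := by
        apply div_le_div_of_nonneg_right hanti (by positivity)
    _ = Real.exp 1 * Real.sqrt N * ((N : ℝ) / Real.exp 1) ^ N := by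
        rw [hsqrt]
        have h2 : Real.sqrt 2 ≠ 0 := by positivity
        field_simp



-- log(1+u) ≥ u/2 for 0 ≤ u ≤ 1
lemma pt_log_ge_half {u : ℝ} (h0 : 0 ≤ u) (h1 : u ≤ 1) : u / 2 ≤ Real.log (1 + u) := by
  rw [Real.le_log_iff_exp_le (by linarith)]
  have h2 : 1 - u/2 ≤ Real.exp (-(u/2)) := by
    have := Real.add_one_le_exp (-(u/2)); linarith
  have h3 : Real.exp (u/2) * (1 - u/2) ≤ 1 := by
    have := mul_le_mul_of_nonneg_left h2 (Real.exp_pos (u/2)).le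
    rwa [← Real.exp_add, add_neg_cancel, Real.exp_zero] at this
  nlinarith [Real.exp_pos (u/2)]

-- integral representation
lemma pt_g_eq {u : ℝ} (h0 : 0 ≤ u) :
    (1 + u) * Real.log (1 + u) - u = ∫ t in (1:ℝ)..(1+u), Real.log t := by
  rw [integral_log]
  simp
  ring

lemma pt_g_quad {u : ℝ} (h0 : 0 ≤ u) (h1 : u ≤ 1) :
    u ^ 2 / 4 ≤ (1 + u) * Real.log (1 + u) - u := by
  rw [pt_g_eq h0]
  have hle : (1:ℝ) ≤ 1 + u := by linarith
  have hi1 : IntervalIntegrable (fun t => (t - 1)/2) MeasureTheory.volume 1 (1+u) := by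
    apply Continuous.intervalIntegrable; continuity
  have hi2 : IntervalIntegrable Real.log MeasureTheory.volume 1 (1+u) := by
    apply intervalIntegral.intervalIntegrable_log
    rw [Set.uIcc_of_le hle]
    intro hc
    simp at hc
    linarith [hc.1]
  have hmono := intervalIntegral.integral_mono_on hle hi1 hi2 (fun t ht => by
    rcases ht with ⟨ht1, ht2⟩
    have := pt_log_ge_half (u := t - 1) (by linarith) (by linarith)
    have he : 1 + (t - 1) = t := by ring
    rw [he] at this
    linarith)
  refine le_trans (le_of_eq ?_) hmono
  rw [intervalIntegral.integral_div]
  rw [intervalIntegral.integral_sub intervalIntegral.intervalIntegrable_id (intervalIntegrable_const)]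
  rw [integral_id, intervalIntegral.integral_const]
  simp
  ring

lemma pt_g_eq' {u : ℝ} (h0 : 0 ≤ u) :
    (1 + u) * Real.log (1 + u) - u = ∫ t in (1:ℝ)..(1+u), Real.log t := by
  rw [integral_log]
  simp
  ring

lemma pt_ii_log (a b : ℝ) (ha : 1 ≤ a) (hab : a ≤ b) :
    IntervalIntegrable Real.log MeasureTheory.volume a b := by
  apply intervalIntegral.intervalIntegrable_log
  rw [Set.uIcc_of_le hab]
  intro hc
  rcases hc with ⟨hc1, _⟩
  linarith

-- (i) linear lower bound for u ≥ 1
lemma pt_g_lin {u : ℝ} (h1 : 1 ≤ u) :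
    (u + 1) * Real.log 2 - 1 ≤ (1 + u) * Real.log (1 + u) - u := by
  rw [pt_g_eq' (by linarith)]
  have hsplit := intervalIntegral.integral_add_adjacent_intervals
    (pt_ii_log 1 2 le_rfl (by norm_num)) (pt_ii_log 2 (1+u) (by norm_num) (by linarith))
  rw [← hsplit]
  have h12 : ∫ t in (1:ℝ)..2, Real.log t = 2 * Real.log 2 - 1 := by
    rw [integral_log]
    simp
    ring
  have h2u : (u - 1) * Real.log 2 ≤ ∫ t in (2:ℝ)..(1+u), Real.log t := by
    have hmono := intervalIntegral.integral_mono_on (by linarith : (2:ℝ) ≤ 1 + u)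
      (intervalIntegrable_const) (pt_ii_log 2 (1+u) (by norm_num) (by linarith))
      (fun t ht => by
        rcases ht with ⟨ht1, _⟩
        exact Real.log_le_log (by norm_num) ht1)
    rw [intervalIntegral.integral_const] at hmono
    have : (1 + u - 2) • Real.log 2 = (u - 1) * Real.log 2 := by
      rw [smul_eq_mul]; ring
    rwa [this] at hmono
  rw [h12]
  linarith

-- (ii) u/4 log u lower bound for u ≥ 4
lemma pt_g_loglin {u : ℝ} (h4 : 4 ≤ u) :
    u / 4 * Real.log u ≤ (1 + u) * Real.log (1 + u) - u := by
  rw [pt_g_eq' (by linarith)]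
  have hsplit := intervalIntegral.integral_add_adjacent_intervals
    (pt_ii_log 1 (1+u/2) le_rfl (by linarith)) (pt_ii_log (1+u/2) (1+u) (by linarith) (by linarith))
  rw [← hsplit]
  have hfirst : 0 ≤ ∫ t in (1:ℝ)..(1+u/2), Real.log t := by
    apply intervalIntegral.integral_nonneg (by linarith)
    intro t ht
    exact Real.log_nonneg ht.1
  have hsecond : u / 2 * Real.log (1 + u/2) ≤ ∫ t in (1+u/2:ℝ)..(1+u), Real.log t := by
    have hmono := intervalIntegral.integral_mono_on (by linarith : (1+u/2:ℝ) ≤ 1 + u)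
      (intervalIntegrable_const) (pt_ii_log (1+u/2) (1+u) (by linarith) (by linarith))
      (fun t ht => by
        rcases ht with ⟨ht1, _⟩
        exact Real.log_le_log (by linarith) ht1)
    rw [intervalIntegral.integral_const] at hmono
    have : (1 + u - (1 + u/2)) • Real.log (1 + u/2) = u / 2 * Real.log (1 + u/2) := by
      rw [smul_eq_mul]; ring
    rwa [this] at hmono
  have hkey : u / 4 * Real.log u ≤ u / 2 * Real.log (1 + u/2) := by
    have h2 : Real.log u ≤ 2 * Real.log (1 + u/2) := by
      have : Real.log u ≤ Real.log ((1 + u/2) ^ 2) := by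
        apply Real.log_le_log (by linarith)
        nlinarith
      rwa [Real.log_pow, Nat.cast_ofNat] at this
    nlinarith [Real.log_nonneg (by linarith : (1:ℝ) ≤ u)]
  linarith

-- E3 combined
lemma pt_g_lower_big {u : ℝ} (h1 : 1 ≤ u) :
    u / 8 * Real.log (max u (Real.exp 1)) ≤ (1 + u) * Real.log (1 + u) - u := by
  rcases le_total u 4 with h4 | h4
  · have hmax : max u (Real.exp 1) ≤ 4 := by
      apply max_le h4
      linarith [Real.exp_one_lt_d9]
    have hlog4 : Real.log 4 = 2 * Real.log 2 := by
      rw [show (4:ℝ) = 2^2 by norm_num, Real.log_pow, Nat.cast_ofNat]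
    have hlogle : Real.log (max u (Real.exp 1)) ≤ 2 * Real.log 2 := by
      rw [← hlog4]
      exact Real.log_le_log (lt_of_lt_of_le (Real.exp_pos 1) (le_max_right _ _)) hmax
    have h1' : u / 8 * Real.log (max u (Real.exp 1)) ≤ u / 8 * (2 * Real.log 2) := by
      apply mul_le_mul_of_nonneg_left hlogle (by linarith)
    refine h1'.trans (le_trans ?_ (pt_g_lin h1))
    nlinarith [Real.log_two_gt_d9]
  · have hmax : max u (Real.exp 1) = u := by
      apply max_eq_left
      linarith [Real.exp_one_lt_d9]
    rw [hmax]
    refine le_trans ?_ (pt_g_loglin h4)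
    have := Real.log_nonneg (by linarith : (1:ℝ) ≤ u)
    nlinarith

-- E4 upper bound
lemma pt_g_upper {u : ℝ} (h0 : 0 ≤ u) :
    (1 + u) * Real.log (1 + u) - u ≤ u ^ 2 := by
  have h := Real.log_le_sub_one_of_pos (by linarith : (0:ℝ) < 1 + u)
  have hl : Real.log (1 + u) ≤ u := by linarith
  nlinarith [Real.log_nonneg (by linarith : (1:ℝ) ≤ 1 + u)]

lemma pt_sub_one_le_sq {t : ℝ} (h : 1 ≤ t) : t - 1 ≤ t^2 := by nlinarith

set_option maxHeartbeats 1000000 in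
/-- Two-sided bound on the log of the Poisson upper tail: there are constants
`c, C > 0` such that uniformly in `s > 0` and `r ≥ √s` with `s + r = N ∈ ℕ`,
`-log P(X_s ≥ s + r) ≍ r·min(r/s, 1)·log(max(r/s, e))`. -/
theorem poisson_upper_tail_log_bounds : ∃ c C : ℝ, 0 < c ∧ 0 < C ∧
    ∀ (s r : ℝ), 0 < s → Real.sqrt s ≤ r → ∀ N : ℕ, (N : ℝ) = s + r →
      c * r * min (r/s) 1 * Real.log (max (r/s) (Real.exp 1)) ≤
        -Real.log (∑' x : ℕ, if N ≤ x then Real.exp (-s) * s ^ x / (Nat.factorial x : ℝ) else 0) ∧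
      -Real.log (∑' x : ℕ, if N ≤ x then Real.exp (-s) * s ^ x / (Nat.factorial x : ℝ) else 0) ≤
        C * r * min (r/s) 1 * Real.log (max (r/s) (Real.exp 1)) := by
  refine ⟨1/8, 12, by norm_num, by norm_num, ?_⟩
  intro s r hs hr N hNr
  set P := ∑' x : ℕ, if N ≤ x then Real.exp (-s) * s ^ x / (Nat.factorial x : ℝ) else 0 with hPdef
  clear_value P
  have hsqrt_pos : 0 < Real.sqrt s := Real.sqrt_pos.mpr hs
  have hr0 : 0 < r := lt_of_lt_of_le hsqrt_pos hr
  have hsr2 : s ≤ r ^ 2 := by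
    rw [← Real.sq_sqrt hs.le]
    exact pow_le_pow_left₀ (Real.sqrt_nonneg s) hr 2
  have hNpos : (0:ℝ) < N := by rw [hNr]; linarith
  have hN1 : 1 ≤ N := by exact_mod_cast Nat.one_le_iff_ne_zero.mpr (by
    intro h; rw [h] at hNpos; norm_num at hNpos)
  have hN1R : (1:ℝ) ≤ N := by exact_mod_cast hN1
  have hsN : s ≤ (N:ℝ) := by rw [hNr]; linarith
  have hterm_pos : 0 < Real.exp (-s) * s ^ N / (Nat.factorial N : ℝ) := by positivity
  have hPpos : 0 < P := lt_of_lt_of_le hterm_pos (hPdef ▸ pt_term_le hs.le N)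
  have hlogterm : Real.log (Real.exp (-s) * s ^ N / (Nat.factorial N : ℝ))
      = -s + (N:ℝ) * Real.log s - Real.log (Nat.factorial N : ℝ) := by
    rw [Real.log_div (by positivity) (by positivity),
      Real.log_mul (by positivity) (by positivity), Real.log_exp, Real.log_pow]
  set u := r / s with hu
  clear_value u
  have hu0 : 0 < u := by rw [hu]; exact div_pos hr0 hs
  have hru : r = s * u := by rw [hu]; field_simp
  have hNsu : (N:ℝ) = s * (1 + u) := by rw [hNr, hru]; ring
  have hL1 : 1 ≤ Real.log (max u (Real.exp 1)) := by
    have h := Real.log_le_log (Real.exp_pos 1) (le_max_right u (Real.exp 1))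
    rwa [Real.log_exp] at h
  have hrhalf : (1:ℝ)/2 ≤ r := by
    rcases le_total s (1/2) with h | h
    · rw [hNr] at hN1R; linarith
    · have h14 : Real.sqrt (1/4) ≤ Real.sqrt s := Real.sqrt_le_sqrt (by linarith)
      have heq : Real.sqrt (1/4) = 1/2 := by
        rw [show (1/4:ℝ) = (1/2)^2 by norm_num, Real.sqrt_sq (by norm_num)]
      rw [heq] at h14
      linarith
  constructor
  · -- LOWER BOUND
    have hcher := hPdef ▸ pt_chernoff hs hsN
    have hlogP : Real.log P ≤ r + (N:ℝ) * Real.log (s / N) := by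
      calc Real.log P ≤ Real.log (Real.exp ((N:ℝ) - s) * (s / N) ^ N) :=
            Real.log_le_log hPpos hcher
        _ = ((N:ℝ) - s) + (N:ℝ) * Real.log (s / N) := by
            rw [Real.log_mul (by positivity) (by positivity), Real.log_exp, Real.log_pow]
        _ = r + (N:ℝ) * Real.log (s / N) := by rw [hNr]; ring
    have hinv : Real.log (s / (N:ℝ)) = - Real.log (1 + u) := by
      rw [← Real.log_inv]
      congr 1
      rw [hNsu]
      rw [eq_comm, inv_eq_iff_eq_inv, eq_comm, inv_div]
      rw [mul_comm, mul_div_assoc, div_self hs.ne', mul_one]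
    have hkey : s * ((1 + u) * Real.log (1 + u) - u) ≤ -Real.log P := by
      rw [hinv, hNsu, hru] at hlogP
      linarith [hlogP]
    rcases le_total u 1 with hu1 | h1u
    · have hmin : min u 1 = u := min_eq_left hu1
      have hmax : max u (Real.exp 1) = Real.exp 1 := max_eq_right (by
        linarith [Real.add_one_le_exp (1:ℝ)])
      rw [hmin, hmax, Real.log_exp]
      have hg := pt_g_quad hu0.le hu1
      have hg2 : s * (u^2/4) ≤ s * ((1 + u) * Real.log (1 + u) - u) :=
        mul_le_mul_of_nonneg_left hg hs.le
      have hnn : 0 ≤ s * (u^2/4) := by positivity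
      calc 1/8 * r * u * 1 = s * (u^2/4) / 2 := by rw [hru]; ring
        _ ≤ s * ((1 + u) * Real.log (1 + u) - u) := by linarith
        _ ≤ -Real.log P := hkey
    · have hmin : min u 1 = 1 := min_eq_right h1u
      rw [hmin]
      have hg := pt_g_lower_big h1u
      calc 1/8 * r * 1 * Real.log (max u (Real.exp 1))
          = s * (u / 8 * Real.log (max u (Real.exp 1))) := by rw [hru]; ring
        _ ≤ s * ((1 + u) * Real.log (1 + u) - u) := mul_le_mul_of_nonneg_left hg hs.le
        _ ≤ -Real.log P := hkey
  · -- UPPER BOUND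
    have hlogu_le : Real.log u ≤ Real.log (max u (Real.exp 1)) :=
      Real.log_le_log hu0 (le_max_left _ _)
    have hlog2 : Real.log 2 ≤ 1 := by
      linarith [Real.log_le_sub_one_of_pos (by norm_num : (0:ℝ) < 2)]
    rcases le_total u 1 with hu1 | h1u
    · -- central regime: r ≤ s
      have hrs : r ≤ s := by
        rw [hu] at hu1
        have := (div_le_one hs).mp hu1
        linarith
      have hmin : min u 1 = u := min_eq_left hu1
      have hmax : max u (Real.exp 1) = Real.exp 1 := max_eq_right (by
        linarith [Real.add_one_le_exp (1:ℝ)])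
      rw [hmin, hmax, Real.log_exp, mul_one]
      set M := ⌈s/r⌉₊ with hM
      clear_value M
      have hsr1 : (1:ℝ) ≤ s/r := (one_le_div hr0).mpr hrs
      have hM1 : 1 ≤ M := by
        rw [hM]
        refine Nat.one_le_iff_ne_zero.mpr (fun h => ?_)
        have := Nat.ceil_eq_zero.mp h
        linarith
      have hMge : s/r ≤ (M:ℝ) := hM ▸ Nat.le_ceil _
      have hMle : (M:ℝ) ≤ s/r + 1 := by
        rw [hM]
        exact (Nat.ceil_lt_add_one (by positivity)).le
      have hM0 : (0:ℝ) < M := by exact_mod_cast hM1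
      have hsrr : s/r ≤ r := by rw [div_le_iff₀ hr0, ← sq]; exact hsr2
      have hNM : (N:ℝ) + M ≤ s + 4*r := by rw [hNr]; linarith
      have hNMpos : (0:ℝ) < (N:ℝ) + M := by positivity
      have hkeyu : s/r * u = 1 := by rw [hu]; field_simp
      -- (s/(N+M))^M ≥ exp(-8)
      have hpow : Real.exp (-8) ≤ (s/((N:ℝ)+M))^M := by
        have hbase : ((N:ℝ)+M)/s ≤ Real.exp (4*u) := by
          have h1 : ((N:ℝ)+M)/s ≤ 1 + 4*u := by
            rw [div_le_iff₀ hs]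
            linarith [hNM, hru]
          linarith [Real.add_one_le_exp (4*u)]
        have hup : (((N:ℝ)+M)/s)^M ≤ Real.exp 8 := by
          calc (((N:ℝ)+M)/s)^M ≤ (Real.exp (4*u))^M :=
                pow_le_pow_left₀ (by positivity) hbase M
            _ = Real.exp ((M:ℝ) * (4*u)) := by rw [← Real.exp_nat_mul]
            _ ≤ Real.exp 8 := by
                apply Real.exp_le_exp.mpr
                have h2 : (M:ℝ) * (4*u) ≤ (s/r + 1) * (4*u) :=
                  mul_le_mul_of_nonneg_right hMle (by positivity)
                have h3 : (s/r + 1) * (4*u) ≤ 8 := by linarith [hkeyu, hu1]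
                linarith
        have hflip : (s/((N:ℝ)+M))^M = ((((N:ℝ)+M)/s)^M)⁻¹ := by
          rw [← inv_pow, inv_div]
        rw [hflip, Real.exp_neg]
        exact inv_anti₀ (by positivity) hup
      have hwin := hPdef ▸ pt_window_le hs hsN hM1
      have hA : s/r * Real.exp (-8) * (Real.exp (-s) * s ^ N / (Nat.factorial N : ℝ)) ≤ P := by
        refine le_trans ?_ hwin
        have h1 : s/r * Real.exp (-8) ≤ (M:ℝ) * (s/((N:ℝ)+M))^M :=
          mul_le_mul hMge hpow (Real.exp_pos _).le hM0.le
        calc s/r * Real.exp (-8) * (Real.exp (-s) * s ^ N / (Nat.factorial N : ℝ))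
            ≤ (M:ℝ) * (s/((N:ℝ)+M))^M * (Real.exp (-s) * s ^ N / (Nat.factorial N : ℝ)) :=
              mul_le_mul_of_nonneg_right h1 hterm_pos.le
          _ = (M:ℝ) * (Real.exp (-s) * s ^ N / (Nat.factorial N : ℝ) * (s/((N:ℝ)+M))^M) := by
              ring
      have hApos : 0 < s/r * Real.exp (-8) * (Real.exp (-s) * s ^ N / (Nat.factorial N : ℝ)) := by
        positivity
      have hlogP : -Real.log P ≤ Real.log r - Real.log s + 8 +
          (s - (N:ℝ) * Real.log s + Real.log (Nat.factorial N : ℝ)) := by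
        have h1 : Real.log (s/r * Real.exp (-8) * (Real.exp (-s) * s ^ N / (Nat.factorial N : ℝ)))
            ≤ Real.log P := Real.log_le_log hApos hA
        rw [Real.log_mul (by positivity) (by positivity),
          Real.log_mul (by positivity) (by positivity),
          Real.log_div hs.ne' hr0.ne', Real.log_exp, hlogterm] at h1
        linarith
      -- Stirling
      have hstir : Real.log (Nat.factorial N : ℝ)
          ≤ 1 + (1/2) * Real.log N + (N:ℝ) * Real.log N - (N:ℝ) := by
        have h1 := Real.log_le_log (by positivity) (pt_stirling hN1)
        rw [Real.log_mul (by positivity) (by positivity),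
          Real.log_mul (Real.exp_ne_zero 1) (by positivity),
          Real.log_exp, Real.log_pow, Real.log_div hNpos.ne' (Real.exp_ne_zero 1),
          Real.log_exp, Real.log_sqrt (Nat.cast_nonneg N)] at h1
        calc Real.log (Nat.factorial N : ℝ)
            ≤ 1 + Real.log N / 2 + (N:ℝ) * (Real.log N - 1) := h1
          _ = 1 + (1/2) * Real.log N + (N:ℝ) * Real.log N - (N:ℝ) := by ring
      have hNlogNs : (N:ℝ) * Real.log N - (N:ℝ) * Real.log s - r
          = s * ((1 + u) * Real.log (1 + u) - u) := by
        have hh : Real.log N = Real.log s + Real.log (1 + u) := by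
          rw [hNsu, Real.log_mul hs.ne' (by positivity)]
        rw [hh, hNsu, hru]
        ring
      have hgu := pt_g_upper hu0.le
      have hsg : s * ((1 + u) * Real.log (1 + u) - u) ≤ r * u := by
        calc s * ((1 + u) * Real.log (1 + u) - u) ≤ s * u^2 :=
              mul_le_mul_of_nonneg_left hgu hs.le
          _ = r * u := by rw [hru]; ring
      have h1ru : 1 ≤ r * u := by
        have he : r * u = r^2/s := by rw [hu]; field_simp
        rw [he, le_div_iff₀ hs, one_mul]
        linarith
      have hlogN : Real.log N ≤ 1 + Real.log s := by
        have h2s : (N:ℝ) ≤ 2*s := by rw [hNr]; linarith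
        calc Real.log N ≤ Real.log (2*s) := Real.log_le_log hNpos h2s
          _ = Real.log 2 + Real.log s := Real.log_mul (by norm_num) hs.ne'
          _ ≤ 1 + Real.log s := by linarith
      have hlogt : Real.log r - (1/2) * Real.log s ≤ r * u := by
        have ht1 : 1 ≤ r / Real.sqrt s := (one_le_div hsqrt_pos).mpr hr
        have ht2 : (r / Real.sqrt s)^2 = r^2/s := by rw [div_pow, Real.sq_sqrt hs.le]
        have he : Real.log (r / Real.sqrt s) = Real.log r - (1/2) * Real.log s := by
          rw [Real.log_div hr0.ne' hsqrt_pos.ne', Real.log_sqrt hs.le]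
          ring
        have h1 := Real.log_le_sub_one_of_pos (by linarith : (0:ℝ) < r / Real.sqrt s)
        have h2 : r / Real.sqrt s - 1 ≤ (r / Real.sqrt s)^2 := pt_sub_one_le_sq ht1
        have hr2ru : r^2/s = r * u := by rw [hu]; field_simp
        linarith [h1, h2, ht2, he, hr2ru]
      have hsN' : s - (N:ℝ) = -r := by rw [hNr]; ring
      have hfinal : -Real.log P ≤ 19/2 + 2 * (r * u) := by
        linarith [hlogP, hstir, hNlogNs, hsN', hlogN, hlogt, hsg]
      linarith [hfinal, h1ru]
    · -- tail regime: s ≤ r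
      have hsr : s ≤ r := by
        rw [hu] at h1u
        have := (one_le_div hs).mp h1u
        linarith
      have hmin : min u 1 = 1 := min_eq_right h1u
      rw [hmin]
      have hlogP : -Real.log P ≤ s - (N:ℝ) * Real.log s + Real.log (Nat.factorial N : ℝ) := by
        have h1 := Real.log_le_log hterm_pos (hPdef ▸ pt_term_le hs.le N)
        rw [hlogterm] at h1
        linarith
      have hfact : Real.log (Nat.factorial N : ℝ) ≤ (N:ℝ) * Real.log N := by
        have h1 : (Nat.factorial N : ℝ) ≤ (N:ℝ)^N := by
          have h2 := Nat.factorial_le_pow N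
          calc (Nat.factorial N : ℝ) ≤ ((N^N : ℕ) : ℝ) := by exact_mod_cast h2
            _ = (N:ℝ)^N := by push_cast; ring
        calc Real.log (Nat.factorial N : ℝ) ≤ Real.log ((N:ℝ)^N) :=
              Real.log_le_log (by positivity) h1
          _ = (N:ℝ) * Real.log N := Real.log_pow N _
      have hNlog : (N:ℝ) * Real.log N - (N:ℝ) * Real.log s = (N:ℝ) * Real.log (1 + u) := by
        have hh : Real.log N = Real.log s + Real.log (1 + u) := by
          rw [hNsu, Real.log_mul hs.ne' (by positivity)]
        rw [hh]; ring
      have hlog1u : Real.log (1 + u) ≤ 2 * Real.log (max u (Real.exp 1)) := by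
        calc Real.log (1 + u) ≤ Real.log (2*u) := Real.log_le_log (by linarith) (by linarith)
          _ = Real.log 2 + Real.log u := Real.log_mul (by norm_num) hu0.ne'
          _ ≤ 1 + Real.log (max u (Real.exp 1)) := by linarith
          _ ≤ 2 * Real.log (max u (Real.exp 1)) := by linarith
      have hN2r : (N:ℝ) ≤ 2*r := by rw [hNr]; linarith
      have hlog1u_nonneg : 0 ≤ Real.log (1 + u) := Real.log_nonneg (by linarith)
      have hL0 : (0:ℝ) ≤ Real.log (max u (Real.exp 1)) := by linarith
      have hfinal : -Real.log P ≤ s + (N:ℝ) * Real.log (1 + u) := by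
        linarith [hlogP, hfact, hNlog]
      calc -Real.log P ≤ s + (N:ℝ) * Real.log (1 + u) := hfinal
        _ ≤ r * Real.log (max u (Real.exp 1)) + 2*r * (2 * Real.log (max u (Real.exp 1))) := by
            have h1 : s ≤ r * Real.log (max u (Real.exp 1)) := by
              have := mul_nonneg hr0.le (by linarith : (0:ℝ) ≤ Real.log (max u (Real.exp 1)) - 1)
              linarith [this, hsr]
            have h2 : (N:ℝ) * Real.log (1 + u) ≤ 2*r * (2 * Real.log (max u (Real.exp 1))) :=
              mul_le_mul hN2r hlog1u hlog1u_nonneg (by linarith)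
            linarith
        _ ≤ 12 * r * 1 * Real.log (max u (Real.exp 1)) := by
            have := mul_nonneg hr0.le hL0
            linarith [this]
end

section
/- For s > 0 let p_s : ℕ → ℝ be the Poisson probability mass function p_s(x) = e^{−s}·s^x/x!. There exist constants c > 0 and C > 0 such that for every s ∈ (0, ∞) and every real r with r ≥ √s and s + r ∈ ℕ, writing N = s + r, one has c·max(s/r, 1) ≤ ( Σ_{x ≥ N} p_s(x) ) / p_s(N) ≤ C·max(s/r, 1). -/
open Real

private lemma fact_add_le_mul_pow (N k : ℕ) :
    ((N + k).factorial : ℝ) ≤ (N.factorial : ℝ) * ((N : ℝ) + (k : ℝ)) ^ k := by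
  induction k with
  | zero => simp
  | succ k ih =>
    have h2 : ((N : ℝ) + (k : ℝ)) ^ k ≤ ((N : ℝ) + (k+1 : ℕ)) ^ k := by
      apply pow_le_pow_left₀ (by positivity)
      push_cast; linarith
    calc ((N + (k+1)).factorial : ℝ)
        = ((N : ℝ) + (k : ℝ) + 1) * ((N + k).factorial : ℝ) := by
          rw [show N + (k+1) = (N + k) + 1 by ring, Nat.factorial_succ]
          push_cast; ring
      _ ≤ ((N : ℝ) + (k : ℝ) + 1) * ((N.factorial : ℝ) * ((N : ℝ) + (k : ℝ)) ^ k) := by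
          apply mul_le_mul_of_nonneg_left ih (by positivity)
      _ ≤ ((N : ℝ) + (k : ℝ) + 1) * ((N.factorial : ℝ) * ((N : ℝ) + (k+1 : ℕ)) ^ k) := by
          apply mul_le_mul_of_nonneg_left
            (mul_le_mul_of_nonneg_left h2 (by positivity)) (by positivity)
      _ = (N.factorial : ℝ) * ((N : ℝ) + (k+1 : ℕ)) ^ (k+1) := by push_cast; ring

/-- Two-sided bound on the Poisson tail-to-point ratio: there are constants
`c, C > 0` such that uniformly in `s > 0` and `r ≥ √s` with `s + r = N ∈ ℕ`,
`P(X_s ≥ s + r) / P(X_s = s + r) ≍ max(s/r, 1)`. -/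
theorem poisson_upper_tail_ratio_bounds : ∃ c C : ℝ, 0 < c ∧ 0 < C ∧
    ∀ (s r : ℝ), 0 < s → Real.sqrt s ≤ r → ∀ N : ℕ, (N : ℝ) = s + r →
      c * max (s/r) 1 ≤
        (∑' x : ℕ, if N ≤ x then Real.exp (-s) * s ^ x / (Nat.factorial x : ℝ) else 0) /
          (Real.exp (-s) * s ^ N / (Nat.factorial N : ℝ)) ∧
      (∑' x : ℕ, if N ≤ x then Real.exp (-s) * s ^ x / (Nat.factorial x : ℝ) else 0) /
          (Real.exp (-s) * s ^ N / (Nat.factorial N : ℝ)) ≤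
        C * max (s/r) 1 := by
  refine ⟨Real.exp (-2), 2, Real.exp_pos _, by norm_num, ?_⟩
  intro s r hs hr N hN
  have hr0 : 0 < r := lt_of_lt_of_le (Real.sqrt_pos.mpr hs) hr
  have hr2 : s ≤ r ^ 2 := by
    nlinarith [Real.sq_sqrt hs.le, Real.sqrt_nonneg s]
  have hNs : s < (N : ℝ) := by rw [hN]; linarith
  have hN0 : 0 < (N : ℝ) := hs.trans hNs
  set P : ℕ → ℝ := fun x => Real.exp (-s) * s ^ x / (Nat.factorial x : ℝ) with hPdef
  have hPpos : ∀ x, 0 < P x := fun x =>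
    div_pos (mul_pos (Real.exp_pos _) (pow_pos hs _)) (by positivity)
  have hsumP : Summable P := by
    have := (Real.summable_pow_div_factorial s).mul_left (Real.exp (-s))
    simpa [hPdef, mul_div_assoc] using this
  set f : ℕ → ℝ := fun x => if N ≤ x then P x else 0 with hfdef
  have hfnn : ∀ x, 0 ≤ f x := by
    intro x; by_cases h : N ≤ x <;> simp [hfdef, h, (hPpos x).le]
  have hsumf : Summable f := by
    apply hsumP.of_nonneg_of_le hfnn
    intro x; by_cases h : N ≤ x <;> simp [hfdef, h, (hPpos x).le]
  have hshift : ∑' x, f x = ∑' k, P (k + N) := by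
    rw [← Summable.sum_add_tsum_nat_add N hsumf]
    have h1 : ∑ i ∈ Finset.range N, f i = 0 := by
      apply Finset.sum_eq_zero; intro i hi
      simp [hfdef, Nat.not_le.mpr (Finset.mem_range.mp hi)]
    have h2 : ∀ k : ℕ, f (k + N) = P (k + N) := by
      intro k; simp [hfdef, Nat.le_add_left]
    simp [h1, h2]
  set S := ∑' x, f x with hSdef
  have hPN : 0 < P N := hPpos N
  have hgoal : (∑' x : ℕ, if N ≤ x then Real.exp (-s) * s ^ x / (Nat.factorial x : ℝ) else 0) /
      (Real.exp (-s) * s ^ N / (Nat.factorial N : ℝ)) = S / P N := rfl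
  rw [hgoal]
  have hq1 : s / N < 1 := (div_lt_one hN0).mpr hNs
  have hq0 : 0 ≤ s / N := by positivity
  have hNfac : (0:ℝ) < (N.factorial : ℝ) := by positivity
  constructor
  · -- Lower bound
    set m : ℕ := ⌊s / r⌋₊ with hmdef
    have hmle : (m : ℝ) ≤ s / r := Nat.floor_le (by positivity)
    have hsr : s / r < (m : ℝ) + 1 := Nat.lt_floor_add_one _
    have hmr : (m : ℝ) * r ≤ s := by rw [← le_div_iff₀ hr0]; exact hmle
    have hterm : ∀ k ≤ m, Real.exp (-2) * P N ≤ P (k + N) := by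
      intro k hk
      have hkm : (k : ℝ) ≤ (m : ℝ) := by exact_mod_cast hk
      have hkr : (k : ℝ) * r ≤ s := le_trans (by nlinarith) hmr
      have hkx : (k : ℝ) * ((r + (m : ℝ)) / s) ≤ 2 := by
        rw [← mul_div_assoc, div_le_iff₀ hs]
        have hkm2 : (k : ℝ) * (m : ℝ) ≤ s := by nlinarith [mul_le_mul hkr hmr (by positivity : (0:ℝ) ≤ (m:ℝ) * r) hs.le]
        nlinarith
      have hNk : (N : ℝ) + (k : ℝ) ≤ s * Real.exp ((r + (m : ℝ)) / s) := by
        have h1 : (r + (m : ℝ)) / s + 1 ≤ Real.exp ((r + (m : ℝ)) / s) := Real.add_one_le_exp _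
        have h2 : s * ((r + (m : ℝ)) / s + 1) = r + (m : ℝ) + s := by field_simp
        nlinarith [Real.exp_pos ((r + (m : ℝ)) / s)]
      have hpowk : ((N : ℝ) + (k : ℝ)) ^ k ≤ Real.exp 2 * s ^ k := by
        calc ((N : ℝ) + (k : ℝ)) ^ k ≤ (s * Real.exp ((r + (m : ℝ)) / s)) ^ k :=
              pow_le_pow_left₀ (by positivity) hNk k
          _ = s ^ k * Real.exp ((r + (m : ℝ)) / s) ^ k := mul_pow _ _ _
          _ = s ^ k * Real.exp ((k : ℝ) * ((r + (m : ℝ)) / s)) := by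
              rw [← Real.exp_nat_mul]
          _ ≤ s ^ k * Real.exp 2 := by
              apply mul_le_mul_of_nonneg_left (Real.exp_le_exp.mpr hkx) (by positivity)
          _ = Real.exp 2 * s ^ k := mul_comm _ _
      have hfact2 : ((N + k).factorial : ℝ) ≤ (N.factorial : ℝ) * (Real.exp 2 * s ^ k) := by
        calc ((N + k).factorial : ℝ) ≤ (N.factorial : ℝ) * ((N : ℝ) + (k : ℝ)) ^ k :=
              fact_add_le_mul_pow N k
          _ ≤ (N.factorial : ℝ) * (Real.exp 2 * s ^ k) :=
              mul_le_mul_of_nonneg_left hpowk (by positivity)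
      have heq3 : P (k + N) = Real.exp (-s) * s ^ (N + k) / ((N + k).factorial : ℝ) := by
        show Real.exp (-s) * s ^ (k + N) / ((k + N).factorial : ℝ) = _
        rw [add_comm k N]
      rw [heq3]
      have hlow : Real.exp (-s) * s ^ (N + k) / ((N.factorial : ℝ) * (Real.exp 2 * s ^ k))
          ≤ Real.exp (-s) * s ^ (N + k) / ((N + k).factorial : ℝ) :=
        div_le_div_of_nonneg_left (by positivity) (by positivity) hfact2
      refine le_trans (le_of_eq ?_) hlow
      show Real.exp (-2) * (Real.exp (-s) * s ^ N / (N.factorial : ℝ)) = _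
      rw [pow_add]
      rw [Real.exp_neg 2]
      field_simp
    have hsum_low : ((m : ℝ) + 1) * (Real.exp (-2) * P N) ≤ S := by
      calc ((m : ℝ) + 1) * (Real.exp (-2) * P N)
          = ∑ _k ∈ Finset.range (m + 1), Real.exp (-2) * P N := by
            rw [Finset.sum_const, Finset.card_range, nsmul_eq_mul]; push_cast; ring
        _ ≤ ∑ k ∈ Finset.range (m + 1), P (k + N) :=
            Finset.sum_le_sum fun i hi => hterm i (Nat.lt_succ_iff.mp (Finset.mem_range.mp hi))
        _ ≤ ∑' k, P (k + N) :=
            Summable.sum_le_tsum _ (fun i _ => (hPpos _).le)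
              (hsumP.comp_injective (add_left_injective N))
        _ = S := hshift.symm
    rw [le_div_iff₀ hPN]
    have hmax : max (s / r) 1 ≤ (m : ℝ) + 1 := by
      exact max_le hsr.le (by linarith [Nat.cast_nonneg (α := ℝ) m])
    calc Real.exp (-2) * max (s / r) 1 * P N
        ≤ Real.exp (-2) * ((m : ℝ) + 1) * P N := by
          apply mul_le_mul_of_nonneg_right _ hPN.le
          exact mul_le_mul_of_nonneg_left hmax (Real.exp_pos _).le
      _ = ((m : ℝ) + 1) * (Real.exp (-2) * P N) := by ring
      _ ≤ S := hsum_low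
  · -- Upper bound
    have hterm_up : ∀ k : ℕ, P (k + N) ≤ P N * (s / N) ^ k := by
      intro k
      have hfact : (N.factorial : ℝ) * (N : ℝ) ^ k ≤ ((N + k).factorial : ℝ) := by
        have h1 : N.factorial * N ^ k ≤ N.factorial * (N + 1) ^ k :=
          Nat.mul_le_mul_left _ (Nat.pow_le_pow_left (Nat.le_succ N) k)
        have h2 := Nat.factorial_mul_pow_le_factorial (m := N) (n := k)
        exact_mod_cast h1.trans h2
      have heq : P N * (s / N) ^ k
          = Real.exp (-s) * s ^ (N + k) / ((N.factorial : ℝ) * (N : ℝ) ^ k) := by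
        show Real.exp (-s) * s ^ N / (N.factorial : ℝ) * (s / N) ^ k = _
        rw [div_pow, div_mul_div_comm]
        ring
      have heq2 : P (k + N) = Real.exp (-s) * s ^ (N + k) / (((N + k).factorial : ℝ)) := by
        show Real.exp (-s) * s ^ (k + N) / (((k + N).factorial : ℝ)) = _
        rw [add_comm k N]
      rw [heq, heq2]
      exact div_le_div_of_nonneg_left (by positivity) (by positivity) hfact
    have hsumgeo : Summable (fun k : ℕ => P N * (s / N) ^ k) :=
      (summable_geometric_of_lt_one hq0 hq1).mul_left _
    have hS_le : S ≤ P N * (1 - s / N)⁻¹ := by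
      calc S = ∑' k, P (k + N) := hshift
        _ ≤ ∑' k, P N * (s / N) ^ k :=
            Summable.tsum_le_tsum hterm_up ((hsumP.comp_injective (add_left_injective N))) hsumgeo
        _ = P N * (1 - s / N)⁻¹ := by
            rw [tsum_mul_left, tsum_geometric_of_lt_one hq0 hq1]
    have hinv : (1 - s / N)⁻¹ = (N : ℝ) / r := by
      have : 1 - s / N = r / N := by
        field_simp
        linarith [hN]
      rw [this, inv_div]
    have hNr : (N : ℝ) / r ≤ 2 * max (s / r) 1 := by
      rw [hN, add_div]
      have h1 : s / r ≤ max (s / r) 1 := le_max_left _ _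
      have h2 : r / r ≤ max (s / r) 1 := by
        rw [div_self (ne_of_gt hr0)]; exact le_max_right _ _
      linarith
    rw [div_le_iff₀ hPN]
    calc S ≤ P N * ((N : ℝ) / r) := by rw [← hinv]; exact hS_le
      _ ≤ P N * (2 * max (s / r) 1) := mul_le_mul_of_nonneg_left hNr hPN.le
      _ = 2 * max (s / r) 1 * P N := by ring
end

section
/- For s > 0 let p_s : ℕ → ℝ be the Poisson probability mass function p_s(x) = e^{−s}·s^x/x!. There exist constants c > 0 and C > 0 such that for every s ∈ (0, ∞) and every real r with √s ≤ r ≤ s and s − r ∈ ℕ, writing N = s − r, one has both c·r²/s ≤ −log( Σ_{x = 0}^{N} p_s(x) ) ≤ C·r²/s, and c·(s/r) ≤ ( Σ_{x = 0}^{N} p_s(x) ) / p_s(N) ≤ C·(s/r). -/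
open Real

set_option maxHeartbeats 1000000

namespace PoissonAux

/-- Stirling upper bound -/
lemma factorial_le_stirling (n : ℕ) (hn : 1 ≤ n) :
    (Nat.factorial n : ℝ) ≤ Real.exp 1 * Real.sqrt n * (n / Real.exp 1) ^ n := by
  obtain ⟨k, rfl⟩ : ∃ k, n = k + 1 := ⟨n - 1, by omega⟩
  have h := Stirling.stirlingSeq'_antitone (Nat.zero_le k)
  have h1 : Stirling.stirlingSeq (k + 1) ≤ Real.exp 1 / Real.sqrt 2 := by
    simpa [Stirling.stirlingSeq_one] using h
  have hpos : (0:ℝ) < Real.sqrt (2 * (k+1) : ℝ) * ((k+1 : ℝ) / Real.exp 1) ^ (k+1) := by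
    positivity
  have h2 : (Nat.factorial (k+1) : ℝ) = Stirling.stirlingSeq (k+1) * (Real.sqrt (2 * (k+1) : ℝ) * ((k+1 : ℝ) / Real.exp 1) ^ (k+1)) := by
    rw [Stirling.stirlingSeq]
    field_simp
    push_cast
    ring
  rw [h2]
  have h3 : Real.sqrt (2 * (k+1) : ℝ) = Real.sqrt 2 * Real.sqrt (k+1 : ℝ) := by
    rw [← Real.sqrt_mul (by norm_num)]
  calc Stirling.stirlingSeq (k+1) * (Real.sqrt (2 * (k+1) : ℝ) * ((k+1 : ℝ) / Real.exp 1) ^ (k+1))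
      ≤ (Real.exp 1 / Real.sqrt 2) * (Real.sqrt (2 * (k+1) : ℝ) * ((k+1 : ℝ) / Real.exp 1) ^ (k+1)) := by
        apply mul_le_mul_of_nonneg_right h1 hpos.le
    _ = Real.exp 1 * Real.sqrt ((k:ℝ)+1) * (((k:ℝ)+1) / Real.exp 1) ^ (k+1) := by
        rw [h3]
        have : Real.sqrt 2 ≠ 0 := by positivity
        push_cast
        field_simp
  norm_num

lemma log_factorial_le (n : ℕ) (hn : 1 ≤ n) :
    Real.log (Nat.factorial n : ℝ) ≤ 1 + Real.log n / 2 + n * Real.log n - n := by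
  have hn0 : (0:ℝ) < n := by exact_mod_cast hn
  have h := factorial_le_stirling n hn
  have hf : (0:ℝ) < (Nat.factorial n : ℝ) := by exact_mod_cast n.factorial_pos
  have := Real.log_le_log hf h
  calc Real.log (Nat.factorial n : ℝ) ≤ Real.log (Real.exp 1 * Real.sqrt n * (n / Real.exp 1) ^ n) := this
    _ = 1 + Real.log n / 2 + n * (Real.log n - 1) := by
        rw [Real.log_mul (by positivity) (by positivity), Real.log_mul (by positivity) (by positivity),
          Real.log_pow, Real.log_exp, Real.log_sqrt hn0.le, Real.log_div hn0.ne' (Real.exp_pos 1).ne',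
          Real.log_exp]
    _ = 1 + Real.log n / 2 + n * Real.log n - n := by ring

lemma term_eq (s : ℝ) (hs : 0 < s) (N k : ℕ) (hk : k ≤ N) :
    Real.exp (-s) * s ^ (N - k) / (Nat.factorial (N - k) : ℝ)
      = Real.exp (-s) * s ^ N / (Nat.factorial N : ℝ) * ((N.descFactorial k : ℝ) / s ^ k) := by
  have h1 : (Nat.factorial (N - k) : ℝ) * (N.descFactorial k : ℝ) = (Nat.factorial N : ℝ) := by
    exact_mod_cast Nat.factorial_mul_descFactorial hk
  have h2 : s ^ (N - k) * s ^ k = s ^ N := by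
    rw [← pow_add, Nat.sub_add_cancel hk]
  have hf1 : (Nat.factorial (N - k) : ℝ) ≠ 0 := by exact_mod_cast (Nat.factorial_pos _).ne'
  have hf2 : (Nat.factorial N : ℝ) ≠ 0 := by exact_mod_cast (Nat.factorial_pos _).ne'
  rw [div_mul_div_comm, div_eq_div_iff hf1 (by positivity)]
  linear_combination Real.exp (-s) * (Nat.factorial N : ℝ) * h2 - Real.exp (-s) * s ^ N * h1

lemma sum_reflect_poisson (s : ℝ) (N : ℕ) :
    ∑ k ∈ Finset.range (N + 1), Real.exp (-s) * s ^ (N - k) / (Nat.factorial (N - k) : ℝ)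
      = ∑ x ∈ Finset.range (N + 1), Real.exp (-s) * s ^ x / (Nat.factorial x : ℝ) := by
  conv_rhs => rw [← Finset.sum_range_reflect]
  apply Finset.sum_congr rfl
  intro i hi
  have h : N + 1 - 1 - i = N - i := by omega
  rw [h]

lemma tail_le (s r : ℝ) (hs : 0 < s) (hr0 : 0 < r) (N : ℕ) (hN : (N:ℝ) = s - r) :
    ∑ x ∈ Finset.range (N + 1), Real.exp (-s) * s ^ x / (Nat.factorial x : ℝ)
      ≤ s / r * (Real.exp (-s) * s ^ N / (Nat.factorial N : ℝ)) := by
  set p := Real.exp (-s) * s ^ N / (Nat.factorial N : ℝ) with hp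
  have hp0 : 0 < p := by positivity
  have hq1 : (N:ℝ)/s < 1 := by rw [div_lt_one hs]; linarith [hN.le]
  have hq0 : (0:ℝ) ≤ (N:ℝ)/s := by positivity
  rw [← sum_reflect_poisson]
  calc ∑ k ∈ Finset.range (N + 1), Real.exp (-s) * s ^ (N - k) / (Nat.factorial (N - k) : ℝ)
      ≤ ∑ k ∈ Finset.range (N + 1), p * (((N:ℝ)/s) ^ k) := by
        apply Finset.sum_le_sum
        intro k hk
        have hkN : k ≤ N := by simpa [Nat.lt_succ_iff] using hk
        rw [term_eq s hs N k hkN, div_pow]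
        gcongr
        exact_mod_cast Nat.descFactorial_le_pow N k
    _ = p * ∑ k ∈ Finset.range (N + 1), ((N:ℝ)/s) ^ k := by rw [Finset.mul_sum]
    _ ≤ p * (1 / (1 - (N:ℝ)/s)) := by
        gcongr
        rw [geom_sum_eq hq1.ne]
        have e : (((N:ℝ)/s) ^ (N+1) - 1)/((N:ℝ)/s - 1) = (1 - ((N:ℝ)/s) ^ (N+1))/(1 - (N:ℝ)/s) := by
          rw [div_eq_div_iff (by linarith) (by linarith)]
          ring
        rw [e]
        have h0 : (0:ℝ) ≤ ((N:ℝ)/s)^(N+1) := by positivity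
        gcongr
        · linarith
    _ = s / r * p := by
        have h1 : 1 - (N:ℝ)/s = r/s := by rw [hN]; field_simp; ring
        rw [h1, one_div_div]
        ring

lemma le_tail (s r : ℝ) (hs : 0 < s) (hsr : Real.sqrt s ≤ r) (hrs : r ≤ s) (N : ℕ)
    (hN : (N:ℝ) = s - r) :
    s / (8 * r) * (Real.exp (-s) * s ^ N / (Nat.factorial N : ℝ))
      ≤ ∑ x ∈ Finset.range (N + 1), Real.exp (-s) * s ^ x / (Nat.factorial x : ℝ) := by
  have hr0 : 0 < r := lt_of_lt_of_le (Real.sqrt_pos.mpr hs) hsr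
  have hss : Real.sqrt s * Real.sqrt s = s := Real.mul_self_sqrt hs.le
  have hs1 : 1 ≤ s := by nlinarith [Real.sqrt_nonneg s]
  set p := Real.exp (-s) * s ^ N / (Nat.factorial N : ℝ) with hp
  have hp0 : 0 < p := by positivity
  have hTp : p ≤ ∑ x ∈ Finset.range (N + 1), Real.exp (-s) * s ^ x / (Nat.factorial x : ℝ) := by
    apply Finset.single_le_sum (f := fun x => Real.exp (-s) * s ^ x / (Nat.factorial x : ℝ))
      (fun i _ => by positivity) (Finset.self_mem_range_succ N)
  by_cases hcase : s / 2 < r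
  · have h1 : s / (8 * r) ≤ 1 := by rw [div_le_one (by positivity)]; linarith
    nlinarith
  · push_neg at hcase
    set m := ⌊s / (2*r)⌋₊ with hm
    have hm1 : (m:ℝ) ≤ s/(2*r) := Nat.floor_le (by positivity)
    have hm2 : s/(2*r) < m + 1 := Nat.lt_floor_add_one _
    have hmr : (m:ℝ) * (2*r) ≤ s := by
      rw [le_div_iff₀ (by positivity)] at hm1
      exact hm1
    have hm1' : (m:ℝ) ≤ s/(2*r) := Nat.floor_le (by positivity)
    have h2m : (m:ℝ) ≤ Real.sqrt s / 2 := by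
      calc (m:ℝ) ≤ s/(2*r) := hm1'
        _ ≤ Real.sqrt s / 2 := by
          rw [div_le_div_iff₀ (by positivity) (by norm_num)]
          nlinarith [Real.sqrt_nonneg s]
    have hmsq : (m:ℝ) * (m:ℝ) ≤ s / 4 := by
      nlinarith [Nat.cast_nonneg (α := ℝ) m, Real.sqrt_nonneg s]
    have hmN' : m ≤ N := by
      have hmN : (m:ℝ) ≤ (N:ℝ) := by
        rw [hN]
        have h2 : Real.sqrt s ≤ s := by nlinarith [Real.sqrt_nonneg s]
        linarith
      exact_mod_cast hmN
    have hd : ((N - m : ℕ):ℝ) = s - r - m := by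
      rw [Nat.cast_sub hmN', hN]
    have key : ∀ k ∈ Finset.range (m+1),
        p * (1/4 : ℝ) ≤ Real.exp (-s) * s ^ (N - k) / (Nat.factorial (N - k) : ℝ) := by
      intro k hk
      have hkm : k ≤ m := Nat.lt_succ_iff.mp (Finset.mem_range.mp hk)
      have hkN : k ≤ N := hkm.trans hmN'
      rw [term_eq s hs N k hkN]
      have hb0 : (0:ℝ) ≤ ((N - m : ℕ):ℝ)/s := by positivity
      have hb1 : ((N - m : ℕ):ℝ)/s ≤ 1 := by
        rw [div_le_one hs, hd]
        have := Nat.cast_nonneg (α := ℝ) m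
        linarith
      have hdesc : ((N - m : ℕ):ℝ)^k ≤ (N.descFactorial k : ℝ) := by
        exact_mod_cast (Nat.pow_le_pow_left (by omega) k).trans (N.pow_sub_le_descFactorial k)
      have hbern : (1:ℝ) + (k:ℝ) * (((N - m : ℕ):ℝ)/s - 1) ≤ (((N - m : ℕ):ℝ)/s)^k := by
        have h := one_add_mul_le_pow (a := ((N - m : ℕ):ℝ)/s - 1) (by linarith) k
        have he : (1:ℝ) + (((N - m : ℕ):ℝ)/s - 1) = ((N - m : ℕ):ℝ)/s := by ring
        rwa [he] at h
      have hfneg : ((N - m : ℕ):ℝ)/s - 1 = -((r + m)/s) := by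
        rw [hd]
        field_simp
        ring
      have hfrac : (m:ℝ) * ((r + m)/s) ≤ 3/4 := by
        have e : (m:ℝ) * ((r + m)/s) = ((m:ℝ)*(r+m))/s := by ring
        rw [e, div_le_iff₀ hs]
        nlinarith
      have hf0 : (0:ℝ) ≤ (r + m)/s := by positivity
      have hkm' : (k:ℝ) ≤ (m:ℝ) := by exact_mod_cast hkm
      have hquarter : (1/4 : ℝ) ≤ (((N - m : ℕ):ℝ)/s)^k := by
        refine le_trans ?_ hbern
        rw [hfneg]
        have hmul : (k:ℝ)*((r+m)/s) ≤ (m:ℝ)*((r+m)/s) := mul_le_mul_of_nonneg_right hkm' hf0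
        linarith
      have hfinal : (1/4 : ℝ) ≤ (N.descFactorial k : ℝ) / s ^ k := by
        refine le_trans hquarter ?_
        rw [div_pow]
        gcongr
      exact mul_le_mul_of_nonneg_left hfinal hp0.le
    have hm2' : s < ((m:ℝ)+1)*(2*r) := by
      rw [div_lt_iff₀ (by positivity)] at hm2
      exact hm2
    calc s/(8*r) * p ≤ ((m:ℝ)+1) * (p * (1/4)) := by
          have h : s/(8*r) ≤ ((m:ℝ)+1)/4 := by
            rw [div_le_div_iff₀ (by positivity) (by norm_num)]
            nlinarith
          calc s/(8*r) * p ≤ (((m:ℝ)+1)/4) * p := mul_le_mul_of_nonneg_right h hp0.le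
            _ = ((m:ℝ)+1) * (p * (1/4)) := by ring
      _ = ∑ _k ∈ Finset.range (m+1), p * (1/4:ℝ) := by
          rw [Finset.sum_const, Finset.card_range, nsmul_eq_mul]
          push_cast
          ring
      _ ≤ ∑ k ∈ Finset.range (m+1), Real.exp (-s) * s ^ (N-k) / (Nat.factorial (N-k) : ℝ) :=
          Finset.sum_le_sum key
      _ ≤ ∑ k ∈ Finset.range (N+1), Real.exp (-s) * s ^ (N-k) / (Nat.factorial (N-k) : ℝ) := by
          apply Finset.sum_le_sum_of_subset_of_nonneg
          · exact Finset.range_subset_range.mpr (by omega)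
          · intros i _ _
            positivity
      _ = ∑ x ∈ Finset.range (N + 1), Real.exp (-s) * s ^ x / (Nat.factorial x : ℝ) :=
          sum_reflect_poisson s N

lemma chernoff (s : ℝ) (hs : 0 < s) (N : ℕ) (hN1 : 1 ≤ N) (hNs : (N:ℝ) ≤ s) :
    ∑ x ∈ Finset.range (N + 1), Real.exp (-s) * s ^ x / (Nat.factorial x : ℝ)
      ≤ Real.exp ((N:ℝ) * Real.log (s/(N:ℝ)) + N - s) := by
  have hN0 : (0:ℝ) < (N:ℝ) := by exact_mod_cast hN1
  have hq : 1 ≤ s/(N:ℝ) := by rw [le_div_iff₀ hN0]; linarith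
  have step1 : ∑ x ∈ Finset.range (N + 1), Real.exp (-s) * s ^ x / (Nat.factorial x : ℝ)
      ≤ Real.exp (-s) * (s/(N:ℝ))^N * ∑ x ∈ Finset.range (N + 1), (N:ℝ) ^ x / (Nat.factorial x : ℝ) := by
    rw [Finset.mul_sum]
    apply Finset.sum_le_sum
    intro x hx
    have hxN : x ≤ N := by simpa [Nat.lt_succ_iff] using hx
    have hsx : s ^ x ≤ (s/(N:ℝ))^N * (N:ℝ)^x := by
      have h1 : s ^ x = (s/(N:ℝ))^x * (N:ℝ)^x := by
        rw [← mul_pow, div_mul_cancel₀ _ hN0.ne']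
      rw [h1]
      apply mul_le_mul_of_nonneg_right (pow_le_pow_right₀ hq hxN) (by positivity)
    calc Real.exp (-s) * s ^ x / (Nat.factorial x : ℝ)
        ≤ Real.exp (-s) * ((s/(N:ℝ))^N * (N:ℝ)^x) / (Nat.factorial x : ℝ) := by
          gcongr
      _ = Real.exp (-s) * (s/(N:ℝ))^N * ((N:ℝ) ^ x / (Nat.factorial x : ℝ)) := by ring
  have step2 : ∑ x ∈ Finset.range (N + 1), (N:ℝ) ^ x / (Nat.factorial x : ℝ) ≤ Real.exp (N:ℝ) :=
    Real.sum_le_exp_of_nonneg hN0.le (N+1)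
  have hpowN : (s/(N:ℝ))^N = Real.exp ((N:ℝ) * Real.log (s/(N:ℝ))) := by
    rw [← Real.log_pow, Real.exp_log (by positivity)]
  calc ∑ x ∈ Finset.range (N + 1), Real.exp (-s) * s ^ x / (Nat.factorial x : ℝ)
      ≤ Real.exp (-s) * (s/(N:ℝ))^N * ∑ x ∈ Finset.range (N + 1), (N:ℝ) ^ x / (Nat.factorial x : ℝ) := step1
    _ ≤ Real.exp (-s) * (s/(N:ℝ))^N * Real.exp (N:ℝ) := by
        apply mul_le_mul_of_nonneg_left step2 (by positivity)
    _ = Real.exp ((N:ℝ) * Real.log (s/(N:ℝ)) + N - s) := by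
        rw [hpowN, ← Real.exp_add, ← Real.exp_add]
        congr 1
        ring

end PoissonAux

open PoissonAux

/-- Two-sided bounds on the Poisson lower tail and on the lower tail-to-point
ratio: there are constants `c, C > 0` such that uniformly in `s > 0` and
`√s ≤ r ≤ s` with `s - r = N ∈ ℕ`, one has
`c·r²/s ≤ -log P(X_s ≤ s - r) ≤ C·r²/s` and
`c·(s/r) ≤ P(X_s ≤ s - r)/P(X_s = s - r) ≤ C·(s/r)`. -/
theorem poisson_lower_tail_bounds : ∃ c C : ℝ, 0 < c ∧ 0 < C ∧
    ∀ (s r : ℝ), 0 < s → Real.sqrt s ≤ r → r ≤ s → ∀ N : ℕ, (N : ℝ) = s - r →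
      (c * r^2 / s ≤
          -Real.log (∑ x ∈ Finset.range (N + 1), Real.exp (-s) * s ^ x / (Nat.factorial x : ℝ)) ∧
        -Real.log (∑ x ∈ Finset.range (N + 1), Real.exp (-s) * s ^ x / (Nat.factorial x : ℝ)) ≤
          C * r^2 / s) ∧
      (c * (s/r) ≤
          (∑ x ∈ Finset.range (N + 1), Real.exp (-s) * s ^ x / (Nat.factorial x : ℝ)) /
            (Real.exp (-s) * s ^ N / (Nat.factorial N : ℝ)) ∧
        (∑ x ∈ Finset.range (N + 1), Real.exp (-s) * s ^ x / (Nat.factorial x : ℝ)) /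
            (Real.exp (-s) * s ^ N / (Nat.factorial N : ℝ)) ≤
          C * (s/r)) := by
  refine ⟨1/8, 6, by norm_num, by norm_num, ?_⟩
  intro s r hs hsr hrs N hN
  have hr0 : 0 < r := lt_of_lt_of_le (Real.sqrt_pos.mpr hs) hsr
  have hss : Real.sqrt s * Real.sqrt s = s := Real.mul_self_sqrt hs.le
  have hs1 : 1 ≤ s := by nlinarith [Real.sqrt_nonneg s]
  set T := ∑ x ∈ Finset.range (N + 1), Real.exp (-s) * s ^ x / (Nat.factorial x : ℝ) with hTdef
  set p := Real.exp (-s) * s ^ N / (Nat.factorial N : ℝ) with hpdef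
  have hp0 : 0 < p := by rw [hpdef]; positivity
  have hupper : T ≤ s / r * p := tail_le s r hs hr0 N hN
  have hlower : s / (8 * r) * p ≤ T := le_tail s r hs hsr hrs N hN
  have hT0 : 0 < T := lt_of_lt_of_le (by positivity) hlower
  have hsr_pos : 0 < s / r := by positivity
  constructor
  · -- log bounds
    rcases Nat.eq_zero_or_pos N with h0 | hN1
    · -- N = 0, r = s
      subst h0
      have hrs' : r = s := by
        have : (0:ℝ) = s - r := by exact_mod_cast hN
        linarith
      have hTe : T = Real.exp (-s) := by
        rw [hTdef, Finset.sum_range_one]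
        simp
      rw [hTe, Real.log_exp]
      subst hrs'
      constructor
      · rw [neg_neg, div_le_iff₀ hr0]; nlinarith
      · rw [neg_neg, le_div_iff₀ hr0]; nlinarith
    · -- N ≥ 1
      have hN0 : (0:ℝ) < (N:ℝ) := by exact_mod_cast hN1
      have hNs : (N:ℝ) ≤ s := by rw [hN]; linarith
      have hNlt : (N:ℝ) < s := by
        rw [hN]
        have : 0 < Real.sqrt s := Real.sqrt_pos.mpr hs
        linarith
      constructor
      · -- lower bound via Chernoff
        have hch := chernoff s hs N hN1 hNs
        have hlogT : Real.log T ≤ (N:ℝ) * Real.log (s/(N:ℝ)) + N - s :=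
          (Real.log_le_iff_le_exp hT0).mpr hch
        have hw : 1 < s/(N:ℝ) := by rw [lt_div_iff₀ hN0]; linarith
        have hsinh : Real.log (s/(N:ℝ)) ≤ (s/(N:ℝ) - (N:ℝ)/s)/2 := by
          have hlw : 0 < Real.log (s/(N:ℝ)) := Real.log_pos hw
          have h := (Real.self_lt_sinh_iff.mpr hlw).le
          rw [Real.sinh_log (by positivity)] at h
          rwa [inv_div] at h
        have h1 : (N:ℝ) * Real.log (s/(N:ℝ)) ≤ (s - (N:ℝ)^2/s)/2 := by
          calc (N:ℝ) * Real.log (s/(N:ℝ)) ≤ (N:ℝ) * ((s/(N:ℝ) - (N:ℝ)/s)/2) :=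
                mul_le_mul_of_nonneg_left hsinh hN0.le
            _ = (s - (N:ℝ)^2/s)/2 := by field_simp
        have h2 : (1/8:ℝ)*r^2/s ≤ s - (N:ℝ) - ((s - (N:ℝ)^2/s)/2) := by
          rw [hN]
          have e : s - (s-r) - ((s - (s-r)^2/s)/2) = (r^2/2)/s := by field_simp; ring
          rw [e, div_le_div_iff₀ (by positivity) hs]
          nlinarith [sq_nonneg r, hs.le]
        linarith
      · -- upper bound via Stirling
        have hlogp : Real.log p = -s + (N:ℝ) * Real.log s - Real.log (Nat.factorial N : ℝ) := by
          rw [hpdef, Real.log_div (by positivity) (by positivity),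
            Real.log_mul (Real.exp_ne_zero _) (by positivity), Real.log_exp, Real.log_pow]
        have hlow' : Real.log (s/(8*r)) + Real.log p ≤ Real.log T := by
          have h := Real.log_le_log (by positivity) hlower
          rwa [Real.log_mul (by positivity) (by positivity)] at h
        have hlogsr : Real.log (s/(8*r)) = Real.log s - (Real.log 8 + Real.log r) := by
          rw [Real.log_div hs.ne' (by positivity), Real.log_mul (by norm_num) hr0.ne']
        have hfact := log_factorial_le N hN1
        -- hA : N log N - N log s ≤ -N r / s
        have hA : (N:ℝ) * Real.log N - (N:ℝ) * Real.log s ≤ -((N:ℝ)*r)/s := by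
          have hd : Real.log ((N:ℝ)/s) ≤ (N:ℝ)/s - 1 := Real.log_le_sub_one_of_pos (by positivity)
          have he : Real.log ((N:ℝ)/s) = Real.log N - Real.log s := Real.log_div hN0.ne' hs.ne'
          have hf : (N:ℝ)/s - 1 = -(r/s) := by rw [hN]; field_simp; ring
          rw [he, hf] at hd
          calc (N:ℝ) * Real.log N - (N:ℝ) * Real.log s = (N:ℝ) * (Real.log N - Real.log s) := by ring
            _ ≤ (N:ℝ) * (-(r/s)) := mul_le_mul_of_nonneg_left hd hN0.le
            _ = -((N:ℝ)*r)/s := by ring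
        have hE : 1 ≤ r^2/s := by
          rw [le_div_iff₀ hs]
          nlinarith [mul_self_le_mul_self (Real.sqrt_nonneg s) hsr]
        have hB : Real.log r - Real.log s + Real.log N / 2 ≤ r^2/s := by
          have hlogNs : Real.log N ≤ Real.log s := Real.log_le_log hN0 hNs
          have hx1 : 1 ≤ r / Real.sqrt s := by
            rw [le_div_iff₀ (Real.sqrt_pos.mpr hs)]; linarith
          have hx2 : (r / Real.sqrt s)^2 = r^2/s := by
            rw [div_pow, Real.sq_sqrt hs.le]
          have hx3 : Real.log (r / Real.sqrt s) = Real.log r - Real.log s / 2 := by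
            rw [Real.log_div hr0.ne' (Real.sqrt_pos.mpr hs).ne', Real.log_sqrt hs.le]
          have hx4 : Real.log (r / Real.sqrt s) ≤ (r / Real.sqrt s)^2 := by
            have h5 := Real.log_le_sub_one_of_pos (show (0:ℝ) < r / Real.sqrt s by positivity)
            nlinarith [hx1]
          rw [hx3, hx2] at hx4
          linarith
        have hD : Real.log 8 ≤ (2.08:ℝ) := by
          have h8 : Real.log 8 = 3 * Real.log 2 := by
            rw [show (8:ℝ) = 2^3 by norm_num, Real.log_pow]
            push_cast
            ring
          have := Real.log_two_lt_d9
          rw [h8]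
          linarith
        have hF : -((N:ℝ)*r)/s + r = r^2/s := by
          rw [hN]; field_simp; ring
        have hC : s - (N:ℝ) = r := by rw [hN]; ring
        -- combine
        have hmain : -Real.log T ≤ Real.log 8 + Real.log r - Real.log s + s - (N:ℝ) * Real.log s
            + (1 + Real.log N / 2 + (N:ℝ) * Real.log N - N) := by
          have := hlow'
          rw [hlogsr, hlogp] at this
          linarith [hfact]
        calc -Real.log T ≤ Real.log 8 + Real.log r - Real.log s + s - (N:ℝ) * Real.log s
            + (1 + Real.log N / 2 + (N:ℝ) * Real.log N - N) := hmain
          _ ≤ 2.08 + 1 + (Real.log r - Real.log s + Real.log N / 2)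
              + ((s - N) + ((N:ℝ) * Real.log N - (N:ℝ) * Real.log s)) := by linarith
          _ ≤ 2.08 + 1 + r^2/s + (r + (-((N:ℝ)*r)/s)) := by linarith
          _ = 3.08 + r^2/s + r^2/s := by rw [add_comm r _, hF]; ring
          _ ≤ 6 * r^2 / s := by
            have : 6 * r^2/s = 6 * (r^2/s) := by ring
            rw [this]
            linarith
  · -- ratio bounds
    constructor
    · rw [le_div_iff₀ hp0]
      calc (1/8:ℝ) * (s/r) * p = s/(8*r) * p := by ring
        _ ≤ T := hlower
    · rw [div_le_iff₀ hp0]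
      calc T ≤ s/r * p := hupper
        _ ≤ 6 * (s/r) * p := by nlinarith
end
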